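/- arXiv:0707.3188 — 3 statements merged into one kernel-verified Lean document; each statement's English description precedes it below -/
import Mathlib

section
/- There exists a constant C = C(d) > 0 such that for every spherically symmetric Schwartz function f : ℝ^d → ℂ and every x ∈ ℝ^d one has |x|^{d-1} |f(x)|^2 ≤ C ‖f‖_{L²(ℝ^d)} ‖∇f‖_{L²(ℝ^d)}. -/
open MeasureTheory Metric Set Filter Topology InnerProductSpace SchwartzMap

noncomputable section

namespace RadialSobolevAux

/-! ### Finite-dimensional Cauchy-Schwarz -/

lemma cs_sum {d : ℕ} (T : EuclideanSpace ℝ (Fin d) →L[ℝ] ℂ) (u : EuclideanSpace ℝ (Fin d))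
    (hu : ‖u‖ = 1) : ‖T u‖ ^ 2 ≤ ∑ i, ‖T (EuclideanSpace.single i 1)‖ ^ 2 := by
  have hdecomp : u = ∑ i, u i • EuclideanSpace.single i (1:ℝ) := by
    have h := (EuclideanSpace.basisFun (Fin d) ℝ).sum_repr' u
    simp only [EuclideanSpace.basisFun_apply, EuclideanSpace.inner_single_left, map_one,
      one_mul, starRingEnd_apply, star_one] at h
    exact h.symm
  have h1 : ‖T u‖ ≤ ∑ i, |u i| * ‖T (EuclideanSpace.single i 1)‖ := by
    conv_lhs => rw [hdecomp]
    rw [map_sum]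
    refine (norm_sum_le _ _).trans ?_
    apply le_of_eq
    congr 1; funext i
    rw [T.map_smul, norm_smul, Real.norm_eq_abs]
  have h2 : (∑ i, |u i| * ‖T (EuclideanSpace.single i 1)‖)^2 ≤
      (∑ i, |u i|^2) * ∑ i, ‖T (EuclideanSpace.single i 1)‖^2 :=
    Finset.sum_mul_sq_le_sq_mul_sq _ _ _
  have h3 : ∑ i, |u i|^2 = 1 := by
    have := EuclideanSpace.norm_eq u
    rw [hu] at this
    have h4 : (1:ℝ) = Real.sqrt (∑ i, ‖u i‖^2) := this
    have h5 : (0:ℝ) ≤ ∑ i, ‖u i‖^2 := Finset.sum_nonneg (fun i _ => sq_nonneg ‖u i‖)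
    have : (∑ i, ‖u i‖^2) = 1 := by
      nlinarith [Real.sq_sqrt h5, h4]
    simpa [Real.norm_eq_abs] using this
  calc ‖T u‖^2 ≤ (∑ i, |u i| * ‖T (EuclideanSpace.single i 1)‖)^2 := by
        apply pow_le_pow_left₀ (norm_nonneg _) h1
    _ ≤ (∑ i, |u i|^2) * ∑ i, ‖T (EuclideanSpace.single i 1)‖^2 := h2
    _ = _ := by rw [h3, one_mul]

/-! ### One-dimensional Schwartz estimates -/

section OneDim
variable (g : SchwartzMap ℝ ℂ) (d : ℕ)

lemma sbound : ∃ M : ℝ, 0 ≤ M ∧ ∀ s : ℝ, ‖g s‖ ≤ M := by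
  obtain ⟨C, hC⟩ := g.decay 0 0
  exact ⟨C, le_trans (norm_nonneg (g 0)) (by simpa using hC.2 0),
    fun s => by simpa using hC.2 s⟩

lemma kbound (k : ℕ) : ∃ C : ℝ, ∀ s : ℝ, ‖s‖ ^ k * ‖g s‖ ≤ C := by
  obtain ⟨C, hC⟩ := g.decay k 0
  exact ⟨C, fun s => by simpa using hC.2 s⟩

lemma int_aux (u v : SchwartzMap ℝ ℂ) (k : ℕ) :
    IntegrableOn (fun s : ℝ => s ^ k * (‖u s‖ * ‖v s‖)) (Ioi (0:ℝ)) := by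
  obtain ⟨M, hM0, hM⟩ := sbound v
  have hint : Integrable (fun s : ℝ => (‖s‖ ^ k * ‖u s‖) * M) :=
    (u.integrable_pow_mul volume k).mul_const M
  refine (hint.restrict (s := Ioi 0)).mono ?_ ?_
  · exact (((continuous_pow k).mul (u.continuous.norm.mul v.continuous.norm))).aestronglyMeasurable.restrict
  · refine ae_of_all _ fun s => ?_
    have h2 : (0:ℝ) ≤ ‖s‖ ^ k * ‖u s‖ := by positivity
    calc ‖s ^ k * (‖u s‖ * ‖v s‖)‖ = ‖s‖ ^ k * (‖u s‖ * ‖v s‖) := by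
          rw [Real.norm_eq_abs (s ^ k * _), abs_mul, abs_pow,
            abs_of_nonneg (mul_nonneg (norm_nonneg _) (norm_nonneg _))]
          rfl
      _ = (‖s‖ ^ k * ‖u s‖) * ‖v s‖ := by ring
      _ ≤ (‖s‖ ^ k * ‖u s‖) * M := mul_le_mul_of_nonneg_left (hM s) h2
      _ ≤ ‖‖s‖ ^ k * ‖u s‖ * M‖ := le_abs_self _

lemma tendsto_phi (hd : 1 ≤ d) :
    Tendsto (fun s : ℝ => s ^ (d-1) * ‖g s‖ ^ 2) atTop (𝓝 0) := by
  obtain ⟨C, hC⟩ := kbound g d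
  obtain ⟨M, hM0, hM⟩ := sbound g
  have hbound : ∀ s : ℝ, 1 ≤ s → s ^ (d-1) * ‖g s‖ ^ 2 ≤ (C * M) / s := by
    intro s hs
    have hs0 : (0:ℝ) < s := lt_of_lt_of_le one_pos hs
    rw [le_div_iff₀ hs0]
    have h0 : s ^ (d-1) * s = s ^ d := by
      rw [← pow_succ, Nat.sub_add_cancel hd]
    have h1 : s ^ (d-1) * ‖g s‖ ^ 2 * s = (s ^ d * ‖g s‖) * ‖g s‖ := by
      rw [← h0]; ring
    rw [h1]
    have h2 : s ^ d * ‖g s‖ ≤ C := by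
      have := hC s
      rwa [Real.norm_eq_abs, abs_of_pos hs0] at this
    have h3 : (0:ℝ) ≤ s ^ d * ‖g s‖ := by positivity
    exact mul_le_mul h2 (hM s) (norm_nonneg _) (le_trans h3 h2)
  refine squeeze_zero' (g := fun s : ℝ => (C * M) / s) ?_ ?_ ?_
  · filter_upwards [eventually_ge_atTop (0:ℝ)] with s hs using
      mul_nonneg (pow_nonneg hs _) (sq_nonneg _)
  · filter_upwards [eventually_ge_atTop (1:ℝ)] with s hs using hbound s hs
  · exact tendsto_const_nhds.div_atTop tendsto_id

lemma hasDeriv_phi (s : ℝ) :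
    HasDerivAt (fun t : ℝ => t ^ (d-1) * ‖g t‖ ^ 2)
      (((d-1 : ℕ) : ℝ) * s ^ (d-1-1) * ‖g s‖ ^ 2
        + s ^ (d-1) * (⟪g s, deriv g s⟫_ℝ + ⟪deriv g s, g s⟫_ℝ)) s := by
  have hg : ∀ t : ℝ, HasDerivAt g (deriv g t) t := fun t => g.differentiableAt.hasDerivAt
  have hψ : HasDerivAt (fun t : ℝ => ⟪g t, g t⟫_ℝ)
      (⟪g s, deriv g s⟫_ℝ + ⟪deriv g s, g s⟫_ℝ) s := (hg s).inner ℝ (hg s)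
  have hprod := (hasDerivAt_pow (d-1) s).mul hψ
  have heq : (fun t : ℝ => t ^ (d-1) * ‖g t‖ ^ 2) = fun t : ℝ => t ^ (d-1) * ⟪g t, g t⟫_ℝ := by
    funext t; rw [real_inner_self_eq_norm_sq]
  rw [heq]
  convert hprod using 2
  · rfl
  · rfl
  · rfl
  · rw [real_inner_self_eq_norm_sq]

lemma deriv_continuous : Continuous (deriv (⇑g)) := by
  have h : (⇑(SchwartzMap.derivCLM ℝ ℂ g)) = deriv (⇑g) :=
    funext fun s => SchwartzMap.derivCLM_apply ℝ g s
  rw [← h]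
  exact (SchwartzMap.derivCLM ℝ ℂ g).continuous

lemma int_aux' : IntegrableOn (fun s : ℝ => s ^ (d-1) * (‖g s‖ * ‖deriv g s‖)) (Ioi (0:ℝ)) := by
  have h := int_aux g (SchwartzMap.derivCLM ℝ ℂ g) (d-1)
  simpa only [SchwartzMap.derivCLM_apply] using h

lemma ftc_bound (hd : 1 ≤ d) (r : ℝ) (hr : 0 ≤ r) :
    r ^ (d-1) * ‖g r‖ ^ 2 ≤
      2 * ∫ s in Ioi (0:ℝ), s ^ (d-1) * (‖g s‖ * ‖deriv g s‖) := by
  set φder : ℝ → ℝ := fun s => ((d-1 : ℕ) : ℝ) * s ^ (d-1-1) * ‖g s‖ ^ 2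
      + s ^ (d-1) * (⟪g s, deriv g s⟫_ℝ + ⟪deriv g s, g s⟫_ℝ) with hφder
  have hA1 : IntegrableOn (fun s : ℝ => s ^ (d-1-1) * (‖g s‖ * ‖g s‖)) (Ioi (0:ℝ)) :=
    int_aux g g _
  have hA2 := int_aux' g d
  have hG : IntegrableOn (fun s : ℝ => ((d-1:ℕ):ℝ) * (s ^ (d-1-1) * (‖g s‖ * ‖g s‖))
      + 2 * (s ^ (d-1) * (‖g s‖ * ‖deriv g s‖))) (Ioi (0:ℝ)) :=
    (hA1.const_mul _).add (hA2.const_mul 2)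
  have hcont : Continuous φder := by
    have h1 : Continuous fun s : ℝ => ⟪g s, deriv g s⟫_ℝ :=
      g.continuous.inner (deriv_continuous g)
    have h2 : Continuous fun s : ℝ => ⟪deriv g s, g s⟫_ℝ :=
      (deriv_continuous g).inner g.continuous
    exact ((continuous_const.mul (continuous_pow _)).mul (g.continuous.norm.pow 2)).add
      ((continuous_pow _).mul (h1.add h2))
  have hptbound : ∀ s : ℝ, 0 < s → ‖φder s‖ ≤ ‖((d-1:ℕ):ℝ) * (s ^ (d-1-1) * (‖g s‖ * ‖g s‖))
      + 2 * (s ^ (d-1) * (‖g s‖ * ‖deriv g s‖))‖ := by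
    intro s hs
    have hs1 : (0:ℝ) ≤ s ^ (d-1-1) := pow_nonneg hs.le _
    have hs2 : (0:ℝ) ≤ s ^ (d-1) := pow_nonneg hs.le _
    have hi1 : |⟪g s, deriv g s⟫_ℝ| ≤ ‖g s‖ * ‖deriv g s‖ := abs_real_inner_le_norm _ _
    have hi2 : |⟪deriv g s, g s⟫_ℝ| ≤ ‖deriv g s‖ * ‖g s‖ := abs_real_inner_le_norm _ _
    have hd1 : (0:ℝ) ≤ ((d-1:ℕ):ℝ) := Nat.cast_nonneg _
    refine le_trans ?_ (le_abs_self _)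
    rw [Real.norm_eq_abs]
    have habs : |φder s| ≤ ((d-1:ℕ):ℝ) * s ^ (d-1-1) * ‖g s‖ ^ 2
        + s ^ (d-1) * (2 * (‖g s‖ * ‖deriv g s‖)) := by
      rw [hφder]
      refine (abs_add_le _ _).trans ?_
      gcongr
      · rw [abs_mul, abs_mul, abs_of_nonneg hd1, abs_of_nonneg hs1, abs_of_nonneg (sq_nonneg _)]
      · rw [abs_mul, abs_of_nonneg hs2]
        refine mul_le_mul_of_nonneg_left ?_ hs2
        refine (abs_add_le _ _).trans ?_
        rw [two_mul]
        exact add_le_add hi1 (hi2.trans (le_of_eq (mul_comm _ _)))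
    refine habs.trans (le_of_eq ?_)
    rw [sq]
    ring
  have hIntφder0 : IntegrableOn φder (Ioi (0:ℝ)) := by
    refine Integrable.mono hG ?_ ?_
    · exact hcont.aestronglyMeasurable.restrict
    · exact (ae_restrict_iff' measurableSet_Ioi).2 (ae_of_all _ fun s hs => hptbound s hs)
  have hIntφder : IntegrableOn φder (Ioi r) := hIntφder0.mono_set (Ioi_subset_Ioi hr)
  have hftc : ∫ s in Ioi r, φder s = 0 - r ^ (d-1) * ‖g r‖ ^ 2 := by
    refine integral_Ioi_of_hasDerivAt_of_tendsto' (fun s _ => hasDeriv_phi g d s) hIntφder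
      (tendsto_phi g d hd)
  have hval : r ^ (d-1) * ‖g r‖ ^ 2 = ∫ s in Ioi r, -φder s := by
    rw [integral_neg, hftc]; ring
  rw [hval]
  have hstep1 : ∫ s in Ioi r, -φder s ≤
      ∫ s in Ioi r, 2 * (s ^ (d-1) * (‖g s‖ * ‖deriv g s‖)) := by
    refine setIntegral_mono_on hIntφder.neg
      (IntegrableOn.mono_set (hA2.const_mul 2) (Ioi_subset_Ioi hr)) measurableSet_Ioi ?_
    intro s hs
    have hs0 : 0 < s := lt_of_le_of_lt hr hs
    have hs1 : (0:ℝ) ≤ s ^ (d-1-1) := pow_nonneg hs0.le _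
    have hs2 : (0:ℝ) ≤ s ^ (d-1) := pow_nonneg hs0.le _
    have hi1 : |⟪g s, deriv g s⟫_ℝ| ≤ ‖g s‖ * ‖deriv g s‖ := abs_real_inner_le_norm _ _
    have hi2 : |⟪deriv g s, g s⟫_ℝ| ≤ ‖deriv g s‖ * ‖g s‖ := abs_real_inner_le_norm _ _
    have hd1 : (0:ℝ) ≤ ((d-1:ℕ):ℝ) := Nat.cast_nonneg _
    show -(((d-1:ℕ):ℝ) * s ^ (d-1-1) * ‖g s‖ ^ 2
      + s ^ (d-1) * (⟪g s, deriv g s⟫_ℝ + ⟪deriv g s, g s⟫_ℝ)) ≤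
      2 * (s ^ (d-1) * (‖g s‖ * ‖deriv g s‖))
    have h1 : (0:ℝ) ≤ ((d-1:ℕ):ℝ) * s ^ (d-1-1) * ‖g s‖ ^ 2 := by positivity
    have h2 : -(s ^ (d-1) * (⟪g s, deriv g s⟫_ℝ + ⟪deriv g s, g s⟫_ℝ)) ≤
        2 * (s ^ (d-1) * (‖g s‖ * ‖deriv g s‖)) := by
      have := abs_add_le (⟪g s, deriv g s⟫_ℝ) (⟪deriv g s, g s⟫_ℝ)
      have h3 : |⟪g s, deriv g s⟫_ℝ + ⟪deriv g s, g s⟫_ℝ| ≤ 2 * (‖g s‖ * ‖deriv g s‖) := by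
        nlinarith
      have h4 := neg_abs_le (⟪g s, deriv g s⟫_ℝ + ⟪deriv g s, g s⟫_ℝ)
      nlinarith
    linarith
  have hstep2 : ∫ s in Ioi r, 2 * (s ^ (d-1) * (‖g s‖ * ‖deriv g s‖)) ≤
      ∫ s in Ioi (0:ℝ), 2 * (s ^ (d-1) * (‖g s‖ * ‖deriv g s‖)) := by
    refine setIntegral_mono_set (hA2.const_mul 2) ?_
      (HasSubset.Subset.eventuallyLE (Ioi_subset_Ioi hr))
    refine (ae_restrict_iff' measurableSet_Ioi).2 (ae_of_all _ fun s hs => ?_)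
    have hs0 : 0 < s := hs
    positivity
  calc ∫ s in Ioi r, -φder s ≤ ∫ s in Ioi (0:ℝ), 2 * (s ^ (d-1) * (‖g s‖ * ‖deriv g s‖)) :=
        hstep1.trans hstep2
    _ = 2 * ∫ s in Ioi (0:ℝ), s ^ (d-1) * (‖g s‖ * ‖deriv g s‖) := integral_const_mul 2 _

lemma holder_bound :
    ∫ s in Ioi (0:ℝ), s ^ (d-1) * (‖g s‖ * ‖deriv g s‖) ≤
      (∫ s in Ioi (0:ℝ), s ^ (d-1) * ‖g s‖ ^ 2) ^ ((1:ℝ)/2) *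
      (∫ s in Ioi (0:ℝ), s ^ (d-1) * ‖deriv g s‖ ^ 2) ^ ((1:ℝ)/2) := by
  set μ0 := (volume : Measure ℝ).restrict (Ioi (0:ℝ)) with hμ0
  set F : ℝ → ℝ := fun s => Real.sqrt (s ^ (d-1)) * ‖g s‖ with hF
  set G : ℝ → ℝ := fun s => Real.sqrt (s ^ (d-1)) * ‖deriv g s‖ with hG
  have hFcont : Continuous F := (Real.continuous_sqrt.comp (continuous_pow _)).mul g.continuous.norm
  have hGcont : Continuous G :=
    (Real.continuous_sqrt.comp (continuous_pow _)).mul (deriv_continuous g).norm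
  have hFnn : ∀ s, 0 ≤ F s := fun s => mul_nonneg (Real.sqrt_nonneg _) (norm_nonneg _)
  have hGnn : ∀ s, 0 ≤ G s := fun s => mul_nonneg (Real.sqrt_nonneg _) (norm_nonneg _)
  have hsq : ∀ s : ℝ, s ∈ Ioi (0:ℝ) → Real.sqrt (s ^ (d-1)) * Real.sqrt (s ^ (d-1)) = s ^ (d-1) :=
    fun s hs => Real.mul_self_sqrt (pow_nonneg (le_of_lt hs) _)
  have hF2 : ∀ᵐ s ∂μ0, F s ^ (2:ℝ) = s ^ (d-1) * ‖g s‖ ^ 2 := by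
    rw [hμ0]
    refine (ae_restrict_iff' measurableSet_Ioi).2 (ae_of_all _ fun s hs => ?_)
    rw [Real.rpow_two, hF]
    calc (Real.sqrt (s ^ (d-1)) * ‖g s‖) ^ 2
        = (Real.sqrt (s ^ (d-1)) * Real.sqrt (s ^ (d-1))) * ‖g s‖ ^ 2 := by ring
      _ = s ^ (d-1) * ‖g s‖ ^ 2 := by rw [hsq s hs]
  have hG2 : ∀ᵐ s ∂μ0, G s ^ (2:ℝ) = s ^ (d-1) * ‖deriv g s‖ ^ 2 := by
    rw [hμ0]
    refine (ae_restrict_iff' measurableSet_Ioi).2 (ae_of_all _ fun s hs => ?_)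
    rw [Real.rpow_two, hG]
    calc (Real.sqrt (s ^ (d-1)) * ‖deriv g s‖) ^ 2
        = (Real.sqrt (s ^ (d-1)) * Real.sqrt (s ^ (d-1))) * ‖deriv g s‖ ^ 2 := by ring
      _ = s ^ (d-1) * ‖deriv g s‖ ^ 2 := by rw [hsq s hs]
  have hFG : ∀ᵐ s ∂μ0, F s * G s = s ^ (d-1) * (‖g s‖ * ‖deriv g s‖) := by
    rw [hμ0]
    refine (ae_restrict_iff' measurableSet_Ioi).2 (ae_of_all _ fun s hs => ?_)
    rw [hF, hG]
    calc Real.sqrt (s ^ (d-1)) * ‖g s‖ * (Real.sqrt (s ^ (d-1)) * ‖deriv g s‖)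
        = (Real.sqrt (s ^ (d-1)) * Real.sqrt (s ^ (d-1))) * (‖g s‖ * ‖deriv g s‖) := by ring
      _ = _ := by rw [hsq s hs]
  have hintF : Integrable (fun s => ‖F s‖ ^ 2) μ0 := by
    have h1 : IntegrableOn (fun s : ℝ => s ^ (d-1) * (‖g s‖ * ‖g s‖)) (Ioi (0:ℝ)) :=
      int_aux g g _
    refine Integrable.congr h1 ?_
    rw [hμ0]
    refine (ae_restrict_iff' measurableSet_Ioi).2 (ae_of_all _ fun s hs => ?_)
    show s ^ (d-1) * (‖g s‖ * ‖g s‖) = ‖F s‖ ^ 2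
    rw [Real.norm_eq_abs, abs_of_nonneg (hFnn s), hF]
    calc s ^ (d-1) * (‖g s‖ * ‖g s‖)
        = (Real.sqrt (s ^ (d-1)) * Real.sqrt (s ^ (d-1))) * (‖g s‖ * ‖g s‖) := by rw [hsq s hs]
      _ = (Real.sqrt (s ^ (d-1)) * ‖g s‖) ^ 2 := by ring
  have hintG : Integrable (fun s => ‖G s‖ ^ 2) μ0 := by
    have h1 : IntegrableOn (fun s : ℝ => s ^ (d-1) * (‖deriv g s‖ * ‖deriv g s‖)) (Ioi (0:ℝ)) :=
      by
      have h := int_aux (SchwartzMap.derivCLM ℝ ℂ g) (SchwartzMap.derivCLM ℝ ℂ g) (d-1)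
      simpa only [SchwartzMap.derivCLM_apply] using h
    refine Integrable.congr h1 ?_
    rw [hμ0]
    refine (ae_restrict_iff' measurableSet_Ioi).2 (ae_of_all _ fun s hs => ?_)
    show s ^ (d-1) * (‖deriv g s‖ * ‖deriv g s‖) = ‖G s‖ ^ 2
    rw [Real.norm_eq_abs, abs_of_nonneg (hGnn s), hG]
    calc s ^ (d-1) * (‖deriv g s‖ * ‖deriv g s‖)
        = (Real.sqrt (s ^ (d-1)) * Real.sqrt (s ^ (d-1))) * (‖deriv g s‖ * ‖deriv g s‖) := by
          rw [hsq s hs]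
      _ = (Real.sqrt (s ^ (d-1)) * ‖deriv g s‖) ^ 2 := by ring
  have hFmem : MemLp F (ENNReal.ofReal 2) μ0 := by
    rw [show ENNReal.ofReal 2 = 2 by norm_num]
    exact (memLp_two_iff_integrable_sq_norm hFcont.aestronglyMeasurable.restrict).2 hintF
  have hGmem : MemLp G (ENNReal.ofReal 2) μ0 := by
    rw [show ENNReal.ofReal 2 = 2 by norm_num]
    exact (memLp_two_iff_integrable_sq_norm hGcont.aestronglyMeasurable.restrict).2 hintG
  have hpq : Real.HolderConjugate 2 2 := Real.holderConjugate_iff.mpr ⟨one_lt_two, by norm_num⟩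
  have hH := integral_mul_le_Lp_mul_Lq_of_nonneg hpq (ae_of_all _ hFnn) (ae_of_all _ hGnn)
    hFmem hGmem
  rw [integral_congr_ae hFG] at hH
  rw [integral_congr_ae hF2, integral_congr_ae hG2] at hH
  exact hH

end OneDim

lemma polar (d : ℕ) (hd : 1 ≤ d) (h : ℝ → ℝ) :
    ∫ y : EuclideanSpace ℝ (Fin d), h ‖y‖ =
      (d : ℝ) * (volume (ball (0 : EuclideanSpace ℝ (Fin d)) 1)).toReal *
        ∫ s in Ioi (0:ℝ), s ^ (d-1) * h s := by
  haveI : Nontrivial (EuclideanSpace ℝ (Fin d)) := by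
    refine ⟨EuclideanSpace.single (⟨0, hd⟩ : Fin d) (1:ℝ), 0, ?_⟩
    intro hcontra
    have h1 : ‖EuclideanSpace.single (⟨0, hd⟩ : Fin d) (1:ℝ)‖ = 1 := by
      simp [EuclideanSpace.norm_single]
    rw [hcontra] at h1
    simp at h1
  have hmain := integral_fun_norm_addHaar (volume : Measure (EuclideanSpace ℝ (Fin d))) h
  rw [finrank_euclideanSpace_fin] at hmain
  rw [hmain, nsmul_eq_mul, smul_eq_mul]
  simp_rw [smul_eq_mul]
  rw [measureReal_def]
  ring

lemma radial_profile (d : ℕ) (hd : 1 ≤ d) (f : SchwartzMap (EuclideanSpace ℝ (Fin d)) ℂ)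
    (hf : ∀ x y : EuclideanSpace ℝ (Fin d), ‖x‖ = ‖y‖ → f x = f y) :
    ∃ g : SchwartzMap ℝ ℂ, (∀ y : EuclideanSpace ℝ (Fin d), f y = g ‖y‖) ∧
      ∀ u : EuclideanSpace ℝ (Fin d), ‖u‖ = 1 → ∀ s : ℝ, f (s • u) = g s := by
  set e₁ : EuclideanSpace ℝ (Fin d) := EuclideanSpace.single (⟨0, hd⟩ : Fin d) (1:ℝ) with he₁
  have hne : ‖e₁‖ = 1 := by simp [he₁, EuclideanSpace.norm_single]
  set L : ℝ →L[ℝ] EuclideanSpace ℝ (Fin d) := (ContinuousLinearMap.id ℝ ℝ).smulRight e₁ with hL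
  have hLapp : ∀ s : ℝ, L s = s • e₁ := fun s => rfl
  have hLnorm : ∀ s : ℝ, ‖L s‖ = |s| := by
    intro s
    rw [hLapp, norm_smul, hne, Real.norm_eq_abs, mul_one]
  refine ⟨SchwartzMap.compCLM ℝ L.hasTemperateGrowth
    ⟨1, 1, fun s => by rw [hLnorm, Real.norm_eq_abs]; nlinarith [abs_nonneg s]⟩ f, ?_, ?_⟩
  · intro y
    show f y = f (L ‖y‖)
    refine hf _ _ ?_
    rw [hLnorm, abs_norm]
  · intro u hu s
    show f (s • u) = f (L s)
    refine hf _ _ ?_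
    rw [hLnorm, norm_smul, hu, mul_one, Real.norm_eq_abs]

lemma deriv_radial (d : ℕ) (f : SchwartzMap (EuclideanSpace ℝ (Fin d)) ℂ) (g : SchwartzMap ℝ ℂ)
    (hg : ∀ u : EuclideanSpace ℝ (Fin d), ‖u‖ = 1 → ∀ s : ℝ, f (s • u) = g s)
    (u : EuclideanSpace ℝ (Fin d)) (hu : ‖u‖ = 1) (t : ℝ) :
    deriv g t = fderiv ℝ f (t • u) u := by
  have h1 : HasFDerivAt f (fderiv ℝ f (t • u)) (t • u) := f.differentiableAt.hasFDerivAt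
  have h2 : HasDerivAt (fun s : ℝ => s • u) u t := by
    simpa using (hasDerivAt_id t).smul_const u
  have h3 : HasDerivAt (fun s : ℝ => f (s • u)) (fderiv ℝ f (t • u) u) t :=
    h1.comp_hasDerivAt t h2
  have h4 : HasDerivAt g (fderiv ℝ f (t • u) u) t := by
    refine h3.congr_of_eventuallyEq ?_
    filter_upwards with s using (hg u hu s).symm
  exact h4.deriv

lemma deriv_zero_radial (d : ℕ) (f : SchwartzMap (EuclideanSpace ℝ (Fin d)) ℂ)
    (g : SchwartzMap ℝ ℂ)
    (hg : ∀ u : EuclideanSpace ℝ (Fin d), ‖u‖ = 1 → ∀ s : ℝ, f (s • u) = g s)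
    (u : EuclideanSpace ℝ (Fin d)) (hu : ‖u‖ = 1) : deriv g 0 = 0 := by
  have heven : ∀ s : ℝ, g (-s) = g s := by
    intro s
    rw [← hg u hu (-s), ← hg (-u) (by rw [norm_neg, hu]) s]
    congr 1
    rw [smul_neg, neg_smul]
  have h1 : HasDerivAt g (deriv g 0) 0 := g.differentiableAt.hasDerivAt
  have h2 : HasDerivAt (fun s : ℝ => g (-s)) (-(deriv g 0)) 0 := by
    have h1' : HasDerivAt (⇑g) (deriv (⇑g) 0) (-0:ℝ) := by simpa using h1
    have := h1'.scomp (0:ℝ) (hasDerivAt_neg (0:ℝ))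
    simp at this
    exact this
  have h3 : HasDerivAt g (-(deriv g 0)) 0 := by
    refine h2.congr_of_eventuallyEq ?_
    filter_upwards with s using (heven s).symm
  have h5 := h1.unique h3
  linear_combination h5 / 2

lemma sq_integrable {d : ℕ} (h : SchwartzMap (EuclideanSpace ℝ (Fin d)) ℂ) :
    Integrable (fun y => ‖h y‖ ^ 2) (volume : Measure (EuclideanSpace ℝ (Fin d))) := by
  obtain ⟨M, hM⟩ := h.decay 0 0
  have hM' : ∀ y, ‖h y‖ ≤ M := fun y => by simpa using hM.2 y
  have hint : Integrable (fun y => M * ‖h y‖) volume := (h.integrable.norm.const_mul M)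
  refine hint.mono ?_ (ae_of_all _ fun y => ?_)
  · exact (h.continuous.norm.pow 2).aestronglyMeasurable
  · have h0 : (0:ℝ) ≤ ‖h y‖ := norm_nonneg _
    have h1 : ‖h y‖ ^ 2 ≤ M * ‖h y‖ := by nlinarith [hM' y]
    calc ‖‖h y‖ ^ 2‖ = ‖h y‖ ^ 2 := by rw [Real.norm_eq_abs, abs_of_nonneg (by positivity)]
      _ ≤ M * ‖h y‖ := h1
      _ ≤ ‖M * ‖h y‖‖ := le_abs_self _

end RadialSobolevAux

open RadialSobolevAux

/-- Radial Sobolev embedding: for spherically symmetric Schwartz `f : ℝ^d → ℂ`,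
`|x|^{d-1} |f(x)|² ≤ C ‖f‖_{L²} ‖∇f‖_{L²}`. -/
theorem radial_sobolev_embedding (d : ℕ) (hd : 1 ≤ d) :
    ∃ C : ℝ, 0 < C ∧
      ∀ f : SchwartzMap (EuclideanSpace ℝ (Fin d)) ℂ,
        (∀ x y : EuclideanSpace ℝ (Fin d), ‖x‖ = ‖y‖ → f x = f y) →
        ∀ x : EuclideanSpace ℝ (Fin d),
          ‖x‖ ^ ((d : ℝ) - 1) * ‖f x‖ ^ 2 ≤
            C * (∫ y : EuclideanSpace ℝ (Fin d), ‖f y‖ ^ 2) ^ ((1 : ℝ) / 2) *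
              (∫ y : EuclideanSpace ℝ (Fin d),
                  ∑ i, ‖fderiv ℝ (⇑f) y (EuclideanSpace.single i 1)‖ ^ 2) ^ ((1 : ℝ) / 2) := by
  classical
  have hd0 : (0:ℝ) < (d:ℝ) := by exact_mod_cast hd
  set ν : ℝ := (volume (ball (0 : EuclideanSpace ℝ (Fin d)) 1)).toReal with hν
  have hν_pos : 0 < ν := by
    rw [hν]
    exact ENNReal.toReal_pos (measure_ball_pos volume 0 one_pos).ne' measure_ball_lt_top.ne
  have hκ_pos : 0 < (d:ℝ) * ν := mul_pos hd0 hν_pos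
  refine ⟨2 / ((d:ℝ) * ν), by positivity, ?_⟩
  intro f hf x
  obtain ⟨g, hrad, hgu⟩ := radial_profile d hd f hf
  set e₀ : EuclideanSpace ℝ (Fin d) := EuclideanSpace.single (⟨0, hd⟩ : Fin d) (1:ℝ) with he₀
  have hne₀ : ‖e₀‖ = 1 := by simp [he₀, EuclideanSpace.norm_single]
  set A := ∫ y : EuclideanSpace ℝ (Fin d), ‖f y‖ ^ 2 with hA
  set B := ∫ y : EuclideanSpace ℝ (Fin d),
      ∑ i, ‖fderiv ℝ (⇑f) y (EuclideanSpace.single i 1)‖ ^ 2 with hB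
  set I1 := ∫ s in Ioi (0:ℝ), s ^ (d-1) * ‖g s‖ ^ 2 with hI1
  set I2 := ∫ s in Ioi (0:ℝ), s ^ (d-1) * ‖deriv g s‖ ^ 2 with hI2
  -- A in polar coordinates
  have hAI : A = (d:ℝ) * ν * I1 := by
    rw [hA, hI1, ← polar d hd (fun t => ‖g t‖ ^ 2)]
    refine integral_congr_ae (ae_of_all _ fun y => ?_)
    show ‖f y‖ ^ 2 = ‖g ‖y‖‖ ^ 2
    rw [hrad y]
  -- pointwise gradient bound
  have hpt : ∀ y : EuclideanSpace ℝ (Fin d), ‖deriv g ‖y‖‖ ^ 2 ≤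
      ∑ i, ‖fderiv ℝ (⇑f) y (EuclideanSpace.single i 1)‖ ^ 2 := by
    intro y
    by_cases hy : y = 0
    · rw [hy, norm_zero, deriv_zero_radial d f g hgu e₀ hne₀]
      simp only [norm_zero]
      rw [zero_pow (by norm_num)]
      exact Finset.sum_nonneg fun i _ => sq_nonneg _
    · have ht : 0 < ‖y‖ := norm_pos_iff.2 hy
      set u : EuclideanSpace ℝ (Fin d) := ‖y‖⁻¹ • y with hu'
      have hu : ‖u‖ = 1 := by
        rw [hu', norm_smul, Real.norm_eq_abs, abs_of_pos (inv_pos.2 ht), inv_mul_cancel₀ ht.ne']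
      have hyu : ‖y‖ • u = y := by rw [hu']; exact smul_inv_smul₀ ht.ne' y
      have hder := deriv_radial d f g hgu u hu ‖y‖
      rw [hyu] at hder
      rw [hder]
      exact cs_sum (fderiv ℝ f y) u hu
  -- integrability of the gradient-sum integrand
  have hint_r : Integrable (fun y : EuclideanSpace ℝ (Fin d) =>
      ∑ i, ‖fderiv ℝ (⇑f) y (EuclideanSpace.single i 1)‖ ^ 2) volume := by
    refine integrable_finset_sum _ fun i _ => ?_
    have h1 := sq_integrable (LineDeriv.lineDerivOp (EuclideanSpace.single i (1:ℝ)) f)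
    refine h1.congr (ae_of_all _ fun y => ?_)
    simp only [SchwartzMap.lineDerivOp_apply_eq_fderiv]
  -- B bounds κ * I2
  have hBI : (d:ℝ) * ν * I2 ≤ B := by
    rw [hB, hI2, ← polar d hd (fun t => ‖deriv g t‖ ^ 2)]
    exact integral_mono_of_nonneg (ae_of_all _ fun y => sq_nonneg _) hint_r (ae_of_all _ hpt)
  have hI1nn : 0 ≤ I1 := setIntegral_nonneg measurableSet_Ioi fun s hs =>
    mul_nonneg (pow_nonneg (le_of_lt hs) _) (sq_nonneg _)
  have hI2nn : 0 ≤ I2 := setIntegral_nonneg measurableSet_Ioi fun s hs =>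
    mul_nonneg (pow_nonneg (le_of_lt hs) _) (sq_nonneg _)
  have hBnn : 0 ≤ B := le_trans (by positivity) hBI
  -- lhs equals the 1d expression
  have hlhs : ‖x‖ ^ ((d : ℝ) - 1) * ‖f x‖ ^ 2 = ‖x‖ ^ (d-1) * ‖g ‖x‖‖ ^ 2 := by
    rw [hrad x]
    congr 1
    rw [show ((d:ℝ) - 1) = ((d-1 : ℕ) : ℝ) by
      rw [Nat.cast_sub hd, Nat.cast_one], Real.rpow_natCast]
  calc ‖x‖ ^ ((d : ℝ) - 1) * ‖f x‖ ^ 2 = ‖x‖ ^ (d-1) * ‖g ‖x‖‖ ^ 2 := hlhs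
    _ ≤ 2 * ∫ s in Ioi (0:ℝ), s ^ (d-1) * (‖g s‖ * ‖deriv g s‖) :=
        ftc_bound g d hd ‖x‖ (norm_nonneg x)
    _ ≤ 2 * (I1 ^ ((1:ℝ)/2) * I2 ^ ((1:ℝ)/2)) := by
        have := holder_bound g d
        linarith
    _ ≤ 2 * ((A / ((d:ℝ)*ν)) ^ ((1:ℝ)/2) * (B / ((d:ℝ)*ν)) ^ ((1:ℝ)/2)) := by
        have e1 : I1 = A / ((d:ℝ)*ν) := by rw [hAI]; field_simp
        have e2 : I2 ≤ B / ((d:ℝ)*ν) := by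
          rw [le_div_iff₀ hκ_pos]; linarith [hBI]
        rw [e1]
        have h3 : I2 ^ ((1:ℝ)/2) ≤ (B / ((d:ℝ)*ν)) ^ ((1:ℝ)/2) :=
          Real.rpow_le_rpow hI2nn e2 (by norm_num)
        have h4 : (0:ℝ) ≤ (A / ((d:ℝ)*ν)) ^ ((1:ℝ)/2) := Real.rpow_nonneg (by
          rw [← e1]; exact hI1nn) _
        nlinarith [Real.rpow_nonneg (le_trans hI2nn e2 : (0:ℝ) ≤ B / ((d:ℝ)*ν)) ((1:ℝ)/2)]
    _ = 2 / ((d:ℝ)*ν) * A ^ ((1:ℝ)/2) * B ^ ((1:ℝ)/2) := by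
        have hAnn : 0 ≤ A := by rw [hAI]; positivity
        rw [Real.div_rpow hAnn hκ_pos.le, Real.div_rpow hBnn hκ_pos.le]
        have hhalf : ((d:ℝ)*ν) ^ ((1:ℝ)/2) * ((d:ℝ)*ν) ^ ((1:ℝ)/2) = (d:ℝ)*ν := by
          rw [← Real.rpow_add hκ_pos]
          norm_num
        rw [div_mul_div_comm, hhalf]
        ring
end
end

section
/- There exists a constant C = C(d) > 0 such that for every N > 0 and every spherically symmetric Schwartz function f : ℝ^d → ℂ whose Fourier transform f̂ is supported in the ball {ξ ∈ ℝ^d : |ξ| ≤ N}, one has |x|^{(d-1)/2} |f(x)| ≤ C N^{1/2} ‖f‖_{L²(ℝ^d)} for every x ∈ ℝ^d. -/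
open MeasureTheory

noncomputable section

/-- The Fourier transform `f̂(ξ) = (2π)^{-d/2} ∫ e^{-i x·ξ} f(x) dx`. -/
def fourierT {d : ℕ} (f : EuclideanSpace ℝ (Fin d) → ℂ) (ξ : EuclideanSpace ℝ (Fin d)) : ℂ :=
  ((2 * Real.pi) ^ (-(d : ℝ) / 2) : ℝ) •
    ∫ x : EuclideanSpace ℝ (Fin d),
      Complex.exp (-Complex.I * ((∑ i, x i * ξ i : ℝ) : ℂ)) * f x

open Real Complex FourierTransform SchwartzMap
open scoped RealInnerProductSpace


variable {V : Type*} [NormedAddCommGroup V] [InnerProductSpace ℝ V]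
  [FiniteDimensional ℝ V] [MeasurableSpace V] [BorelSpace V]

lemma schwartz_fourier_integrable (u : SchwartzMap V ℂ) : Integrable (𝓕 ⇑u) volume := by
  have := (SchwartzMap.fourierTransformCLM ℂ u).integrable (μ := volume)
  rwa [SchwartzMap.fourierTransformCLM_apply] at this

lemma innerl_flip : (innerₗ V).flip = innerₗ V := by
  apply LinearMap.ext; intro x; apply LinearMap.ext; intro y
  simp only [LinearMap.flip_apply, innerₗ_apply_apply]
  exact real_inner_comm x y

lemma schwartz_plancherel (u : SchwartzMap V ℂ) :
    ∫ ξ, ‖𝓕 (⇑u) ξ‖ ^ 2 = ∫ x, ‖u x‖ ^ 2 := by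
  have hu : Integrable (⇑u) volume := u.integrable
  have hF : Integrable (𝓕 ⇑u) volume := schwartz_fourier_integrable u
  have hg : Integrable (fun ξ => (starRingEnd ℂ) (𝓕 (⇑u) ξ)) volume :=
    (Complex.conjCLE.toContinuousLinearMap.integrable_comp hF :)
  have key := VectorFourier.integral_fourierIntegral_smul_eq_flip (L := innerₗ V)
      Real.continuous_fourierChar continuous_inner hu hg
  rw [innerl_flip] at key
  have hginv : ∀ x, 𝓕 (fun ξ => (starRingEnd ℂ) (𝓕 (⇑u) ξ)) x = (starRingEnd ℂ) (u x) := by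
    intro x
    rw [Real.fourier_eq']
    have h1 : ∀ v : V, Complex.exp (((-2 * π * (inner ℝ v x : ℝ) : ℝ) : ℂ) * I) • (starRingEnd ℂ) (𝓕 (⇑u) v)
        = (starRingEnd ℂ) (Complex.exp (((2 * π * (inner ℝ v x : ℝ) : ℝ) : ℂ) * I) • 𝓕 (⇑u) v) := by
      intro v
      rw [smul_eq_mul, smul_eq_mul, map_mul, ← Complex.exp_conj]
      congr 2
      rw [map_mul, Complex.conj_I, Complex.conj_ofReal]
      push_cast
      ring
    simp_rw [h1]
    rw [integral_conj, ← Real.fourierInv_eq']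
    congr 1
    exact hu.fourierInv_fourier_eq hF u.continuous.continuousAt
  have key2 : ∫ ξ, 𝓕 (⇑u) ξ • (starRingEnd ℂ) (𝓕 (⇑u) ξ) =
      ∫ x, u x • (starRingEnd ℂ) (u x) := by
    have key' : ∫ ξ, 𝓕 (⇑u) ξ • (starRingEnd ℂ) (𝓕 (⇑u) ξ) =
        ∫ x, u x • 𝓕 (fun ξ => (starRingEnd ℂ) (𝓕 (⇑u) ξ)) x := key
    simp_rw [hginv] at key'
    exact key'
  have e1 : ∀ z : ℂ, z • (starRingEnd ℂ) z = ((‖z‖ ^ 2 : ℝ) : ℂ) := by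
    intro z
    rw [smul_eq_mul, Complex.mul_conj]
    norm_cast
    rw [Complex.normSq_eq_norm_sq]
  simp_rw [e1] at key2
  rw [← RCLike.ofReal_inj (K := ℂ), ← integral_ofReal, ← integral_ofReal]
  exact key2

section more
variable {V : Type*} [NormedAddCommGroup V] [InnerProductSpace ℝ V]
  [FiniteDimensional ℝ V] [MeasurableSpace V] [BorelSpace V]

lemma schwartz_normsq_integrable (u : SchwartzMap V ℂ) :
    Integrable (fun x => ‖u x‖ ^ 2) volume := by
  obtain ⟨C, -, hC⟩ := u.decay 0 0
  simp only [pow_zero, one_mul, norm_iteratedFDeriv_zero] at hC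
  have h := (u.integrable (μ := volume)).norm.bdd_mul
    (c := C) (u.continuous.norm.aestronglyMeasurable) (Filter.Eventually.of_forall fun x => by
      simpa [Real.norm_eq_abs, _root_.abs_of_nonneg (norm_nonneg (u x))] using hC x)
  apply h.congr
  filter_upwards with x
  ring

lemma sum_inner_sq {ι : Type*} [Fintype ι] (b : OrthonormalBasis ι ℝ V) (v : V) :
    ∑ i, (inner ℝ (b i) v : ℝ) ^ 2 = ‖v‖ ^ 2 := by
  calc ∑ i, (inner ℝ (b i) v : ℝ) ^ 2 = ∑ i, ‖b.repr v i‖ ^ 2 := by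
        refine Finset.sum_congr rfl fun i _ => ?_
        rw [b.repr_apply_apply, Real.norm_eq_abs, _root_.sq_abs]
    _ = ‖v‖ ^ 2 := by
        have hh : Real.sqrt (∑ i, ‖b.repr v i‖ ^ 2) ^ 2 = ∑ i, ‖b.repr v i‖ ^ 2 :=
          Real.sq_sqrt (by positivity)
        rw [← hh, ← EuclideanSpace.norm_eq, b.repr.norm_map]

lemma clm_norm_sq_le_sum {ι : Type*} [Fintype ι] (b : OrthonormalBasis ι ℝ V)
    (L : V →L[ℝ] ℂ) : ‖L‖ ^ 2 ≤ ∑ i, ‖L (b i)‖ ^ 2 := by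
  set S := Real.sqrt (∑ i, ‖L (b i)‖ ^ 2) with hS
  have hS0 : 0 ≤ S := Real.sqrt_nonneg _
  have hb : ∀ v : V, ‖L v‖ ≤ S * ‖v‖ := by
    intro v
    conv_lhs => rw [← b.sum_repr' v]
    rw [map_sum]
    simp only [_root_.map_smul]
    refine (norm_sum_le _ _).trans ?_
    have he : ∀ i : ι, ‖(inner ℝ (b i) v : ℝ) • L (b i)‖
        = |(inner ℝ (b i) v : ℝ)| * ‖L (b i)‖ := fun i => by
      rw [norm_smul, Real.norm_eq_abs]
    simp_rw [he]
    have CS := Finset.sum_mul_sq_le_sq_mul_sq Finset.univ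
      (fun i => |(inner ℝ (b i) v : ℝ)|) (fun i => ‖L (b i)‖)
    have h1 : ∑ i, |(inner ℝ (b i) v : ℝ)| ^ 2 = ‖v‖ ^ 2 := by
      simp_rw [_root_.sq_abs]; exact sum_inner_sq b v
    have h2 : (∑ i, |(inner ℝ (b i) v : ℝ)| * ‖L (b i)‖) ^ 2 ≤ (S * ‖v‖) ^ 2 := by
      calc (∑ i, |(inner ℝ (b i) v : ℝ)| * ‖L (b i)‖) ^ 2
          ≤ (∑ i, |(inner ℝ (b i) v : ℝ)| ^ 2) * (∑ i, ‖L (b i)‖ ^ 2) := CS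
        _ = (S * ‖v‖) ^ 2 := by
            rw [h1, mul_pow, hS, Real.sq_sqrt (by positivity), mul_comm]
    have h3 : 0 ≤ ∑ i, |(inner ℝ (b i) v : ℝ)| * ‖L (b i)‖ := by positivity
    nlinarith [mul_nonneg hS0 (norm_nonneg v)]
  have hop := L.opNorm_le_bound hS0 hb
  calc ‖L‖ ^ 2 ≤ S ^ 2 := pow_le_pow_left₀ (norm_nonneg L) hop 2
    _ = _ := Real.sq_sqrt (by positivity)

lemma schwartz_fderiv_integrable (u : SchwartzMap V ℂ) :
    Integrable (fderiv ℝ ⇑u) volume := by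
  have h := (SchwartzMap.fderivCLM ℝ V ℂ u).integrable (μ := volume)
  have e : ⇑(SchwartzMap.fderivCLM ℝ V ℂ u) = fderiv ℝ ⇑u :=
    funext fun x => SchwartzMap.fderivCLM_apply ℝ u x
  rwa [e] at h

lemma norm_fourier_pderiv (u : SchwartzMap V ℂ) (m ξ : V) :
    ‖𝓕 (fun x => fderiv ℝ (⇑u) x m) ξ‖ = 2 * π * |(inner ℝ ξ m : ℝ)| * ‖𝓕 (⇑u) ξ‖ := by
  have h1 : Integrable (fderiv ℝ ⇑u) volume := schwartz_fderiv_integrable u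
  have h3 : 𝓕 (fun x => fderiv ℝ (⇑u) x m) ξ = 𝓕 (fderiv ℝ ⇑u) ξ m :=
    (Real.fourier_continuousLinearMap_apply h1).symm
  rw [h3, Real.fourier_fderiv u.integrable u.differentiable h1]
  rw [VectorFourier.fourierSMulRight_apply, norm_smul, norm_smul]
  simp only [ContinuousLinearMap.neg_apply, innerSL_apply_apply ℝ, norm_neg, norm_mul,
    RCLike.norm_ofNat, Complex.norm_I, Complex.norm_real, Real.norm_eq_abs, mul_one,
    _root_.abs_of_nonneg Real.pi_nonneg]
  ring
end more

section bern
variable {V : Type*} [NormedAddCommGroup V] [InnerProductSpace ℝ V]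
  [FiniteDimensional ℝ V] [MeasurableSpace V] [BorelSpace V]

/-- Partial derivative in direction `m` on Schwartz space. -/
def SchwartzMap.pderivCLM (𝕜 : Type*) [RCLike 𝕜] [NormedSpace 𝕜 ℂ] [SMulCommClass ℝ 𝕜 ℂ]
    (m : V) : SchwartzMap V ℂ →L[𝕜] SchwartzMap V ℂ :=
  (SchwartzMap.evalCLM 𝕜 V ℂ m).comp (SchwartzMap.fderivCLM 𝕜 V ℂ)

theorem SchwartzMap.pderivCLM_apply (𝕜 : Type*) [RCLike 𝕜] [NormedSpace 𝕜 ℂ]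
    [SMulCommClass ℝ 𝕜 ℂ] (m : V) (u : SchwartzMap V ℂ)
    (x : V) : SchwartzMap.pderivCLM 𝕜 m u x = fderiv ℝ (⇑u) x m :=
  rfl

lemma fourier_normsq_integrable (u : SchwartzMap V ℂ) :
    Integrable (fun ξ => ‖𝓕 (⇑u) ξ‖ ^ 2) volume := by
  have h := schwartz_normsq_integrable (SchwartzMap.fourierTransformCLM ℂ u)
  have e : ⇑(SchwartzMap.fourierTransformCLM ℂ u) = 𝓕 ⇑u := by
    rw [SchwartzMap.fourierTransformCLM_apply, SchwartzMap.fourier_coe]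
  rwa [e] at h

lemma pderiv_coe (u : SchwartzMap V ℂ) (m : V) :
    ⇑(SchwartzMap.pderivCLM ℝ m u) = fun x => fderiv ℝ (⇑u) x m :=
  funext fun x => SchwartzMap.pderivCLM_apply ℝ m u x

lemma bernstein_L2 (u : SchwartzMap V ℂ) (M : ℝ)
    (hsupp : ∀ ξ : V, 𝓕 (⇑u) ξ ≠ 0 → 2 * π * ‖ξ‖ ≤ M) :
    ∫ x, ‖fderiv ℝ (⇑u) x‖ ^ 2 ≤ M ^ 2 * ∫ x, ‖u x‖ ^ 2 := by
  classical
  set b := stdOrthonormalBasis ℝ V with hb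
  have hPint : ∀ i, Integrable (fun x => ‖fderiv ℝ (⇑u) x (b i)‖ ^ 2) volume := by
    intro i
    have h := schwartz_normsq_integrable (SchwartzMap.pderivCLM ℝ (b i) u)
    rwa [pderiv_coe] at h
  have hFPint : ∀ i, Integrable
      (fun ξ => (2 * π * |(inner ℝ ξ (b i) : ℝ)|) ^ 2 * ‖𝓕 (⇑u) ξ‖ ^ 2) volume := by
    intro i
    have h := fourier_normsq_integrable (SchwartzMap.pderivCLM ℝ (b i) u)
    rw [pderiv_coe] at h
    apply h.congr
    filter_upwards with ξ
    rw [norm_fourier_pderiv u (b i) ξ]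
    ring
  have step1 : ∫ x, ‖fderiv ℝ (⇑u) x‖ ^ 2
      ≤ ∑ i, ∫ x, ‖fderiv ℝ (⇑u) x (b i)‖ ^ 2 := by
    rw [← integral_finset_sum _ (fun i _ => hPint i)]
    apply integral_mono_of_nonneg (Filter.Eventually.of_forall fun x => by positivity)
      (integrable_finset_sum _ (fun i _ => hPint i))
    filter_upwards with x
    simpa using clm_norm_sq_le_sum b (fderiv ℝ (⇑u) x)
  have step2 : ∀ i, ∫ x, ‖fderiv ℝ (⇑u) x (b i)‖ ^ 2
      = ∫ ξ, (2 * π * |(inner ℝ ξ (b i) : ℝ)|) ^ 2 * ‖𝓕 (⇑u) ξ‖ ^ 2 := by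
    intro i
    have h0 := schwartz_plancherel (SchwartzMap.pderivCLM ℝ (b i) u)
    rw [pderiv_coe] at h0
    rw [← h0]
    congr 1
    funext ξ
    rw [norm_fourier_pderiv u (b i) ξ]
    ring
  have step3 : ∑ i, ∫ ξ, (2 * π * |(inner ℝ ξ (b i) : ℝ)|) ^ 2 * ‖𝓕 (⇑u) ξ‖ ^ 2
      = ∫ ξ, (2 * π * ‖ξ‖) ^ 2 * ‖𝓕 (⇑u) ξ‖ ^ 2 := by
    rw [← integral_finset_sum _ (fun i _ => hFPint i)]
    congr 1
    funext ξ
    have hs : ∑ i, (inner ℝ ξ (b i) : ℝ) ^ 2 = ‖ξ‖ ^ 2 := by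
      have := sum_inner_sq b ξ
      simp_rw [real_inner_comm] at this
      exact this
    calc ∑ i, (2 * π * |(inner ℝ ξ (b i) : ℝ)|) ^ 2 * ‖𝓕 (⇑u) ξ‖ ^ 2
        = (2 * π) ^ 2 * ‖𝓕 (⇑u) ξ‖ ^ 2 * ∑ i, (inner ℝ ξ (b i) : ℝ) ^ 2 := by
          rw [Finset.mul_sum]
          refine Finset.sum_congr rfl fun i _ => ?_
          rw [mul_pow, mul_pow, _root_.sq_abs]
          ring
      _ = (2 * π * ‖ξ‖) ^ 2 * ‖𝓕 (⇑u) ξ‖ ^ 2 := by rw [hs]; ring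
  have step4 : ∫ ξ, (2 * π * ‖ξ‖) ^ 2 * ‖𝓕 (⇑u) ξ‖ ^ 2
      ≤ M ^ 2 * ∫ ξ, ‖𝓕 (⇑u) ξ‖ ^ 2 := by
    rw [← integral_const_mul]
    apply integral_mono_of_nonneg (Filter.Eventually.of_forall fun ξ => by positivity)
      ((fourier_normsq_integrable u).const_mul _)
    filter_upwards with ξ
    by_cases hξ : 𝓕 (⇑u) ξ = 0
    · simp [hξ]
    · have h1 := hsupp ξ hξ
      have h2 : (0:ℝ) ≤ 2 * π * ‖ξ‖ := by positivity
      have : (2 * π * ‖ξ‖) ^ 2 ≤ M ^ 2 := pow_le_pow_left₀ h2 h1 2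
      have h3 : (0:ℝ) ≤ ‖𝓕 (⇑u) ξ‖ ^ 2 := by positivity
      exact mul_le_mul_of_nonneg_right this h3
  calc ∫ x, ‖fderiv ℝ (⇑u) x‖ ^ 2
      ≤ ∑ i, ∫ x, ‖fderiv ℝ (⇑u) x (b i)‖ ^ 2 := step1
    _ = ∑ i, ∫ ξ, (2 * π * |(inner ℝ ξ (b i) : ℝ)|) ^ 2 * ‖𝓕 (⇑u) ξ‖ ^ 2 :=
        Finset.sum_congr rfl fun i _ => step2 i
    _ = ∫ ξ, (2 * π * ‖ξ‖) ^ 2 * ‖𝓕 (⇑u) ξ‖ ^ 2 := step3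
    _ ≤ M ^ 2 * ∫ ξ, ‖𝓕 (⇑u) ξ‖ ^ 2 := step4
    _ = M ^ 2 * ∫ x, ‖u x‖ ^ 2 := by rw [schwartz_plancherel u]
end bern

section ray
variable {V : Type*} [NormedAddCommGroup V] [InnerProductSpace ℝ V]
  [FiniteDimensional ℝ V] [MeasurableSpace V] [BorelSpace V]

lemma integrableOn_Ioi_of_decay {F : ℝ → ℝ} (hcont : Continuous F) {C : ℝ}
    (hbound : ∀ s : ℝ, 1 ≤ s → |F s| ≤ C / s ^ 2) :
    IntegrableOn F (Set.Ioi (0:ℝ)) := by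
  have h1 : IntegrableOn F (Set.Ioc (0:ℝ) 1) := hcont.integrableOn_Ioc
  have hmaj : IntegrableOn (fun s : ℝ => C * s ^ (-2 : ℝ)) (Set.Ioi (1:ℝ)) :=
    (integrableOn_Ioi_rpow_of_lt (by norm_num) one_pos).const_mul C
  have h2 : IntegrableOn F (Set.Ioi (1:ℝ)) := by
    apply hmaj.mono' hcont.aestronglyMeasurable.restrict
    filter_upwards [ae_restrict_mem measurableSet_Ioi] with s hs
    have h1s : (1:ℝ) ≤ s := le_of_lt hs
    have hs0 : (0:ℝ) < s := lt_of_lt_of_le one_pos h1s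
    have he : s ^ (-2:ℝ) = (s ^ 2)⁻¹ := by
      rw [show (-2:ℝ) = -((2:ℕ):ℝ) by norm_num, Real.rpow_neg hs0.le, Real.rpow_natCast]
    rw [Real.norm_eq_abs, he]
    calc |F s| ≤ C / s ^ 2 := hbound s h1s
      _ = C * (s ^ 2)⁻¹ := div_eq_mul_inv C _
  have h := h1.union h2
  rwa [Set.Ioc_union_Ioi_eq_Ioi zero_le_one] at h

lemma ray_decay {W : Type*} [NormedAddCommGroup W] [NormedSpace ℝ W]
    (u : SchwartzMap V W) {e₀ : V} (he₀ : ‖e₀‖ = 1) (k : ℕ) :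
    ∃ C : ℝ, 0 ≤ C ∧ ∀ s : ℝ, 0 ≤ s → s ^ k * ‖u (s • e₀)‖ ≤ C := by
  obtain ⟨C, hC0, hC⟩ := u.decay k 0
  refine ⟨C, hC0.le, fun s hs => ?_⟩
  have h := hC (s • e₀)
  rwa [norm_iteratedFDeriv_zero, norm_smul, he₀, mul_one, Real.norm_eq_abs,
    _root_.abs_of_nonneg hs] at h

lemma ftc_ray (f : SchwartzMap V ℂ) {e₀ : V} (he₀ : ‖e₀‖ = 1) {r : ℝ} (hr : 0 ≤ r) :
    ‖f (r • e₀)‖ ^ 2 ≤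
      ∫ s in Set.Ioi r, 2 * (‖f (s • e₀)‖ * ‖fderiv ℝ (⇑f) (s • e₀) e₀‖) := by
  set g : ℝ → ℂ := fun s => f (s • e₀) with hgdef
  set g₁ : ℝ → ℂ := fun s => fderiv ℝ (⇑f) (s • e₀) e₀ with hg₁def
  have hgd : ∀ s : ℝ, HasDerivAt g (g₁ s) s := by
    intro s
    have h1 : HasDerivAt (fun t : ℝ => t • e₀) e₀ s := by
      simpa using (hasDerivAt_id s).smul_const e₀
    exact (f.differentiable (s • e₀)).hasFDerivAt.comp_hasDerivAt s h1
  have hφ : ∀ s : ℝ, HasDerivAt (fun t => ‖g t‖ ^ 2) (2 * (inner ℝ (g s) (g₁ s) : ℝ)) s :=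
    fun s => (hgd s).norm_sq
  have hgc : Continuous g := f.continuous.comp (continuous_id.smul continuous_const)
  have hg₁c : Continuous g₁ := by
    have h := (SchwartzMap.pderivCLM ℝ e₀ f).continuous
    rw [pderiv_coe] at h
    exact h.comp (continuous_id.smul continuous_const)
  obtain ⟨C₀, hC₀0, hC₀⟩ := ray_decay f he₀ 0
  obtain ⟨C₂, hC₂0, hC₂'⟩ := ray_decay (SchwartzMap.pderivCLM ℝ e₀ f) he₀ 2
  have hC₂ : ∀ s : ℝ, 0 ≤ s → s ^ 2 * ‖g₁ s‖ ≤ C₂ := by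
    intro s hs
    have := hC₂' s hs
    rwa [pderiv_coe] at this
  simp only [pow_zero, one_mul] at hC₀
  have hgb : ∀ s : ℝ, 0 ≤ s → ‖g s‖ ≤ C₀ := fun s hs => hC₀ s hs
  have hg₁b : ∀ s : ℝ, 1 ≤ s → ‖g₁ s‖ ≤ C₂ / s ^ 2 := by
    intro s hs
    have hs0 : (0:ℝ) < s := lt_of_lt_of_le one_pos hs
    rw [le_div_iff₀ (by positivity)]
    calc ‖g₁ s‖ * s ^ 2 = s ^ 2 * ‖g₁ s‖ := by ring
      _ ≤ C₂ := hC₂ s hs0.le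
  -- integrability of the majorant 2‖g‖‖g₁‖ on Ioi 0
  have hmaj0 : IntegrableOn (fun s => 2 * (‖g s‖ * ‖g₁ s‖)) (Set.Ioi (0:ℝ)) := by
    apply integrableOn_Ioi_of_decay (by fun_prop) (C := 2 * (C₀ * C₂))
    intro s hs
    have hs0 : (0:ℝ) < s := lt_of_lt_of_le one_pos hs
    have h1 : ‖g s‖ * ‖g₁ s‖ ≤ C₀ * (C₂ / s ^ 2) :=
      mul_le_mul (hgb s hs0.le) (hg₁b s hs) (norm_nonneg _) hC₀0
    rw [_root_.abs_of_nonneg (by positivity)]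
    calc 2 * (‖g s‖ * ‖g₁ s‖) ≤ 2 * (C₀ * (C₂ / s ^ 2)) := by linarith
      _ = 2 * (C₀ * C₂) / s ^ 2 := by ring
  have hψint : IntegrableOn (fun s => 2 * (inner ℝ (g s) (g₁ s) : ℝ)) (Set.Ioi (0:ℝ)) := by
    apply hmaj0.mono' ((continuous_const.mul (hgc.inner hg₁c)).aestronglyMeasurable.restrict)
    filter_upwards with s
    rw [Real.norm_eq_abs, abs_mul, _root_.abs_two]
    have h := abs_real_inner_le_norm (g s) (g₁ s)
    linarith
  -- tendsto at top
  obtain ⟨C₁, hC₁0, hC₁⟩ := ray_decay f he₀ 1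
  have htend : Filter.Tendsto (fun s => ‖g s‖ ^ 2) Filter.atTop (nhds 0) := by
    apply squeeze_zero' (g := fun s => C₀ * C₁ / s)
    · filter_upwards with s; positivity
    · filter_upwards [Filter.eventually_ge_atTop (1:ℝ)] with s hs
      have hs0 : (0:ℝ) < s := lt_of_lt_of_le one_pos hs
      have h1 : s ^ 1 * ‖g s‖ ≤ C₁ := hC₁ s hs0.le
      rw [pow_one] at h1
      have h2 : ‖g s‖ ≤ C₁ / s := by rw [le_div_iff₀ hs0]; linarith
      have h3 : ‖g s‖ ≤ C₀ := hgb s hs0.le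
      calc ‖g s‖ ^ 2 = ‖g s‖ * ‖g s‖ := sq (‖g s‖) ▸ by ring
        _ ≤ C₀ * (C₁ / s) := mul_le_mul h3 h2 (norm_nonneg _) hC₀0
        _ = C₀ * C₁ / s := by ring
    · exact Filter.Tendsto.div_atTop tendsto_const_nhds Filter.tendsto_id
  have hψr : IntegrableOn (fun s => 2 * (inner ℝ (g s) (g₁ s) : ℝ)) (Set.Ioi r) :=
    hψint.mono_set (Set.Ioi_subset_Ioi hr)
  have hFTC := integral_Ioi_of_hasDerivAt_of_tendsto' (f' := fun s => 2 * (inner ℝ (g s) (g₁ s) : ℝ))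
    (fun s _ => hφ s) hψr htend
  have hmajr : IntegrableOn (fun s => 2 * (‖g s‖ * ‖g₁ s‖)) (Set.Ioi r) :=
    hmaj0.mono_set (Set.Ioi_subset_Ioi hr)
  have heq : ‖g r‖ ^ 2 = ∫ s in Set.Ioi r, -(2 * (inner ℝ (g s) (g₁ s) : ℝ)) := by
    rw [integral_neg, hFTC]; ring
  calc ‖f (r • e₀)‖ ^ 2 = ∫ s in Set.Ioi r, -(2 * (inner ℝ (g s) (g₁ s) : ℝ)) := heq
    _ ≤ ∫ s in Set.Ioi r, 2 * (‖g s‖ * ‖g₁ s‖) := by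
        apply integral_mono hψr.neg hmajr
        intro s
        have h := abs_real_inner_le_norm (g s) (g₁ s)
        have h2 := neg_abs_le ((inner ℝ (g s) (g₁ s) : ℝ))
        simp only [Pi.neg_apply]
        linarith

end ray

section rad2
variable {V : Type*} [NormedAddCommGroup V] [InnerProductSpace ℝ V]
  [FiniteDimensional ℝ V] [MeasurableSpace V] [BorelSpace V]

lemma radial_fderiv_norm (f : SchwartzMap V ℂ)
    (hrad : ∀ x y : V, ‖x‖ = ‖y‖ → f x = f y) {x y : V} (h : ‖x‖ = ‖y‖) :
    ‖fderiv ℝ (⇑f) x‖ = ‖fderiv ℝ (⇑f) y‖ := by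
  set R := Submodule.reflection (ℝ ∙ (x - y))ᗮ with hRdef
  have hRx : R x = y := Submodule.reflection_sub h
  set T : V →L[ℝ] V := R.toLinearIsometry.toContinuousLinearMap with hTdef
  have hT : ⇑T = ⇑R := rfl
  have h2 : ⇑f ∘ ⇑T = ⇑f := funext fun z => hrad (T z) z (by rw [hT]; exact R.norm_map z)
  have h1 : HasFDerivAt (⇑f ∘ ⇑T) ((fderiv ℝ (⇑f) (T x)).comp T) x :=
    ((f.differentiable (T x)).hasFDerivAt).comp x T.hasFDerivAt
  rw [h2] at h1
  have hTx : T x = y := hRx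
  rw [h1.fderiv, hTx]
  exact ContinuousLinearMap.opNorm_comp_linearIsometryEquiv _ R

lemma polar_radial [Nontrivial V] (F : ℝ → ℝ) (G : V → ℝ) (hG : ∀ y, G y = F ‖y‖) :
    ∫ y, G y = (Module.finrank ℝ V) •
      (volume (Metric.ball (0:V) 1)).toReal •
        ∫ s in Set.Ioi (0:ℝ), s ^ (Module.finrank ℝ V - 1) • F s := by
  rw [show G = fun y => F ‖y‖ from funext hG]
  exact integral_fun_norm_addHaar volume F

lemma weighted_ray_integrable {W₁ W₂ : Type*} [NormedAddCommGroup W₁] [NormedSpace ℝ W₁]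
    [NormedAddCommGroup W₂] [NormedSpace ℝ W₂]
    (u₁ : SchwartzMap V W₁) (u₂ : SchwartzMap V W₂) {e₀ : V} (he₀ : ‖e₀‖ = 1) (k : ℕ) :
    IntegrableOn (fun s : ℝ => s ^ k * (‖u₁ (s • e₀)‖ * ‖u₂ (s • e₀)‖)) (Set.Ioi (0:ℝ)) := by
  obtain ⟨C₁, h10, h1⟩ := ray_decay u₁ he₀ 0
  obtain ⟨C₂, h20, h2⟩ := ray_decay u₂ he₀ (k + 2)
  simp only [pow_zero, one_mul] at h1
  have hcont : Continuous (fun s : ℝ => s ^ k * (‖u₁ (s • e₀)‖ * ‖u₂ (s • e₀)‖)) := by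
    have c1 : Continuous (fun s : ℝ => s • e₀) := continuous_id.smul continuous_const
    exact (continuous_pow k).mul
      (((u₁.continuous.comp c1).norm).mul ((u₂.continuous.comp c1).norm))
  apply integrableOn_Ioi_of_decay hcont (C := C₁ * C₂)
  intro s hs
  have hs0 : (0:ℝ) < s := lt_of_lt_of_le one_pos hs
  have hk2 : s ^ (k + 2) * ‖u₂ (s • e₀)‖ ≤ C₂ := h2 s hs0.le
  have hb2 : s ^ k * ‖u₂ (s • e₀)‖ ≤ C₂ / s ^ 2 := by
    rw [le_div_iff₀ (by positivity)]
    calc s ^ k * ‖u₂ (s • e₀)‖ * s ^ 2 = s ^ (k + 2) * ‖u₂ (s • e₀)‖ := by ring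
      _ ≤ C₂ := hk2
  rw [_root_.abs_of_nonneg (by positivity)]
  calc s ^ k * (‖u₁ (s • e₀)‖ * ‖u₂ (s • e₀)‖)
      = ‖u₁ (s • e₀)‖ * (s ^ k * ‖u₂ (s • e₀)‖) := by ring
    _ ≤ C₁ * (C₂ / s ^ 2) := by
        apply mul_le_mul (h1 s hs0.le) hb2 (by positivity) h10
    _ = C₁ * C₂ / s ^ 2 := by ring
end rad2

section ft
open Finset in
lemma fourierT_eq {d : ℕ} (f : EuclideanSpace ℝ (Fin d) → ℂ) (ξ : EuclideanSpace ℝ (Fin d)) :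
    fourierT f ((2 * π) • ξ) = ((2 * π) ^ (-(d:ℝ) / 2) : ℝ) • 𝓕 f ξ := by
  unfold fourierT
  congr 1
  rw [Real.fourier_eq']
  congr 1
  funext x
  rw [smul_eq_mul]
  congr 1
  have h1 : ∑ i, x i * ((2 * π) • ξ) i = 2 * π * (inner ℝ x ξ : ℝ) := by
    simp only [PiLp.smul_apply, smul_eq_mul, PiLp.inner_apply, RCLike.inner_apply,
      conj_trivial]
    rw [Finset.mul_sum]
    exact Finset.sum_congr rfl fun i _ => by ring
  rw [h1]
  congr 1
  push_cast
  ring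
end ft


set_option maxHeartbeats 1000000 in
open Set in
/-- Bernstein-type endpoint radial Sobolev embedding: if `f` is spherically symmetric
with Fourier support in `{|ξ| ≤ N}`, then `|x|^{(d-1)/2} |f(x)| ≤ C N^{1/2} ‖f‖_{L²}`. -/
theorem radial_bernstein_embedding (d : ℕ) (hd : 1 ≤ d) :
    ∃ C : ℝ, 0 < C ∧
      ∀ (N : ℝ), 0 < N →
        ∀ f : SchwartzMap (EuclideanSpace ℝ (Fin d)) ℂ,
          (∀ x y : EuclideanSpace ℝ (Fin d), ‖x‖ = ‖y‖ → f x = f y) →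
          (∀ ξ : EuclideanSpace ℝ (Fin d), fourierT (⇑f) ξ ≠ 0 → ‖ξ‖ ≤ N) →
          ∀ x : EuclideanSpace ℝ (Fin d),
            ‖x‖ ^ (((d : ℝ) - 1) / 2) * ‖f x‖ ≤
              C * N ^ ((1 : ℝ) / 2) *
                (∫ y : EuclideanSpace ℝ (Fin d), ‖f y‖ ^ 2) ^ ((1 : ℝ) / 2) := by
  classical
  set ν : ℝ := (volume (Metric.ball (0 : EuclideanSpace ℝ (Fin d)) 1)).toReal with hνdef
  have hν0 : 0 < ν := by
    rw [hνdef]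
    exact ENNReal.toReal_pos (Metric.measure_ball_pos volume 0 one_pos).ne' measure_ball_lt_top.ne
  have hd0 : (0:ℝ) < d := by exact_mod_cast hd
  set κ : ℝ := d * ν with hκdef
  have hκ : 0 < κ := mul_pos hd0 hν0
  refine ⟨Real.sqrt (2 / κ), Real.sqrt_pos.2 (by positivity), ?_⟩
  intro N hN f hrad hsupp x
  set e₀ : EuclideanSpace ℝ (Fin d) := EuclideanSpace.single (⟨0, hd⟩ : Fin d) (1:ℝ) with he₀def
  have he₀ : ‖e₀‖ = 1 := by rw [he₀def, EuclideanSpace.norm_single]; norm_num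
  haveI hnt : Nontrivial (EuclideanSpace ℝ (Fin d)) :=
    ⟨e₀, 0, fun h => by rw [h, norm_zero] at he₀; exact one_ne_zero he₀.symm⟩
  have hdim : Module.finrank ℝ (EuclideanSpace ℝ (Fin d)) = d := finrank_euclideanSpace_fin
  -- support translation
  have hsupp' : ∀ ξ : EuclideanSpace ℝ (Fin d), 𝓕 (⇑f) ξ ≠ 0 → 2 * π * ‖ξ‖ ≤ N := by
    intro ξ hξ
    have h1 : fourierT (⇑f) ((2 * π) • ξ) ≠ 0 := by
      rw [fourierT_eq]
      simp only [ne_eq, smul_eq_zero, not_or]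
      exact ⟨ne_of_gt (Real.rpow_pos_of_pos (by positivity) _), hξ⟩
    have h2 := hsupp _ h1
    rwa [norm_smul, Real.norm_eq_abs, _root_.abs_of_pos (by positivity : (0:ℝ) < 2*π)] at h2
  set r : ℝ := ‖x‖ with hrdef
  have hr0 : 0 ≤ r := norm_nonneg x
  have hfx : f x = f (r • e₀) := hrad x (r • e₀)
    (by rw [norm_smul, Real.norm_eq_abs, _root_.abs_of_nonneg hr0, he₀, mul_one])
  set I : ℝ := ∫ y : EuclideanSpace ℝ (Fin d), ‖f y‖ ^ 2 with hIdef
  have hI0 : 0 ≤ I := integral_nonneg fun y => by positivity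
  -- polar identities
  have hpolarA : I = κ * ∫ s in Ioi (0:ℝ), s ^ (d - 1) * ‖f (s • e₀)‖ ^ 2 := by
    have h := polar_radial (V := EuclideanSpace ℝ (Fin d))
      (fun s => ‖f (s • e₀)‖ ^ 2) (fun y => ‖f y‖ ^ 2) (fun y => by
        show ‖f y‖ ^ 2 = ‖f (‖y‖ • e₀)‖ ^ 2
        rw [hrad y (‖y‖ • e₀) (by
          rw [norm_smul, Real.norm_eq_abs, _root_.abs_of_nonneg (norm_nonneg y), he₀, mul_one])])
    rw [hIdef, h, hdim]
    simp only [nsmul_eq_mul, smul_eq_mul]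
    rw [hκdef]; ring
  have hpolarB : (∫ y : EuclideanSpace ℝ (Fin d), ‖fderiv ℝ (⇑f) y‖ ^ 2)
      = κ * ∫ s in Ioi (0:ℝ), s ^ (d - 1) * ‖fderiv ℝ (⇑f) (s • e₀)‖ ^ 2 := by
    have h := polar_radial (V := EuclideanSpace ℝ (Fin d))
      (fun s => ‖fderiv ℝ (⇑f) (s • e₀)‖ ^ 2) (fun y => ‖fderiv ℝ (⇑f) y‖ ^ 2) (fun y => by
        show ‖fderiv ℝ (⇑f) y‖ ^ 2 = ‖fderiv ℝ (⇑f) (‖y‖ • e₀)‖ ^ 2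
        rw [radial_fderiv_norm f hrad (x := y) (y := ‖y‖ • e₀) (by
          rw [norm_smul, Real.norm_eq_abs, _root_.abs_of_nonneg (norm_nonneg y), he₀, mul_one])])
    rw [h, hdim]
    simp only [nsmul_eq_mul, smul_eq_mul]
    rw [hκdef]; ring
  -- Bernstein
  have hbern : (∫ y : EuclideanSpace ℝ (Fin d), ‖fderiv ℝ (⇑f) y‖ ^ 2) ≤ N ^ 2 * I :=
    bernstein_L2 f N hsupp'
  -- integrability facts
  have hint_gg₁ : IntegrableOn
      (fun s : ℝ => s ^ (d-1) * (‖f (s • e₀)‖ * ‖fderiv ℝ (⇑f) (s • e₀) e₀‖)) (Ioi (0:ℝ)) := by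
    have h := weighted_ray_integrable f (SchwartzMap.pderivCLM ℝ e₀ f) he₀ (d-1)
    simp only [pderiv_coe] at h
    exact h
  have hint_W : IntegrableOn
      (fun s : ℝ => s ^ (d-1) * (2 * (‖f (s • e₀)‖ * ‖fderiv ℝ (⇑f) (s • e₀) e₀‖)))
      (Ioi (0:ℝ)) := by
    have h := hint_gg₁.const_mul 2
    apply h.congr
    filter_upwards with s
    ring
  have hint_F2 : IntegrableOn (fun s : ℝ => s ^ (d-1) * ‖f (s • e₀)‖ ^ 2) (Ioi (0:ℝ)) := by
    have h := weighted_ray_integrable f f he₀ (d-1)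
    apply h.congr
    filter_upwards with s
    ring
  have hint_F3 : IntegrableOn (fun s : ℝ => s ^ (d-1) * ‖fderiv ℝ (⇑f) (s • e₀)‖ ^ 2)
      (Ioi (0:ℝ)) := by
    have h := weighted_ray_integrable (SchwartzMap.fderivCLM ℝ (EuclideanSpace ℝ (Fin d)) ℂ f) (SchwartzMap.fderivCLM ℝ (EuclideanSpace ℝ (Fin d)) ℂ f)
      he₀ (d-1)
    have e : ∀ z, (SchwartzMap.fderivCLM ℝ (EuclideanSpace ℝ (Fin d)) ℂ f) z = fderiv ℝ (⇑f) z :=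
      fun z => SchwartzMap.fderivCLM_apply ℝ f z
    simp only [e] at h
    apply h.congr
    filter_upwards with s
    ring
  -- main chain
  have main : r ^ (d-1) * ‖f x‖ ^ 2 ≤ 2 * N * I / κ := by
    have hftc : ‖f (r • e₀)‖ ^ 2 ≤
        ∫ s in Ioi r, 2 * (‖f (s • e₀)‖ * ‖fderiv ℝ (⇑f) (s • e₀) e₀‖) := ftc_ray f he₀ hr0
    have step2 : r ^ (d-1) * ‖f x‖ ^ 2 ≤
        ∫ s in Ioi r, r ^ (d-1) * (2 * (‖f (s • e₀)‖ * ‖fderiv ℝ (⇑f) (s • e₀) e₀‖)) := by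
      rw [integral_const_mul, hfx]
      exact mul_le_mul_of_nonneg_left hftc (by positivity)
    have hint_X0 : IntegrableOn
        (fun s : ℝ => ‖f (s • e₀)‖ * ‖fderiv ℝ (⇑f) (s • e₀) e₀‖) (Ioi (0:ℝ)) := by
      have h := weighted_ray_integrable f (SchwartzMap.pderivCLM ℝ e₀ f) he₀ 0
      simp only [pderiv_coe, pow_zero, one_mul] at h
      exact h
    have step3 : (∫ s in Ioi r, r ^ (d-1) * (2 * (‖f (s • e₀)‖ * ‖fderiv ℝ (⇑f) (s • e₀) e₀‖)))
        ≤ ∫ s in Ioi r, s ^ (d-1) * (2 * (‖f (s • e₀)‖ * ‖fderiv ℝ (⇑f) (s • e₀) e₀‖)) := by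
      apply setIntegral_mono_on
        (((hint_X0.mono_set (Ioi_subset_Ioi hr0)).const_mul 2).const_mul (r ^ (d-1)))
        (hint_W.mono_set (Ioi_subset_Ioi hr0)) measurableSet_Ioi
      intro s hs
      exact mul_le_mul_of_nonneg_right (pow_le_pow_left₀ hr0 (le_of_lt hs) (d-1))
        (by positivity)
    have step4 : (∫ s in Ioi r, s ^ (d-1) * (2 * (‖f (s • e₀)‖ * ‖fderiv ℝ (⇑f) (s • e₀) e₀‖)))
        ≤ ∫ s in Ioi (0:ℝ), s ^ (d-1) * (2 * (‖f (s • e₀)‖ * ‖fderiv ℝ (⇑f) (s • e₀) e₀‖)) := by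
      apply setIntegral_mono_set hint_W
      · filter_upwards [ae_restrict_mem measurableSet_Ioi] with s hs
        have : (0:ℝ) < s := hs
        positivity
      · exact (Ioi_subset_Ioi hr0).eventuallyLE
    have key : ∀ a b c : ℝ, 0 ≤ a → 0 ≤ b → b ≤ c → 2*(a*b) ≤ N*a^2 + N⁻¹*c^2 := by
      intro a b c ha hb hbc
      have h4 : N⁻¹ * (N*a - c)^2 = N*a^2 - 2*(a*c) + N⁻¹*c^2 := by
        field_simp
        ring
      have h5 : 0 ≤ N⁻¹ * (N*a - c)^2 := by positivity
      nlinarith [mul_le_mul_of_nonneg_left hbc (by linarith : (0:ℝ) ≤ 2*a)]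
    have step5 : (∫ s in Ioi (0:ℝ), s ^ (d-1) * (2 * (‖f (s • e₀)‖ * ‖fderiv ℝ (⇑f) (s • e₀) e₀‖)))
        ≤ ∫ s in Ioi (0:ℝ), (N * (s ^ (d-1) * ‖f (s • e₀)‖ ^ 2)
            + N⁻¹ * (s ^ (d-1) * ‖fderiv ℝ (⇑f) (s • e₀)‖ ^ 2)) := by
      apply setIntegral_mono_on hint_W
        ((hint_F2.const_mul N).add (hint_F3.const_mul N⁻¹)) measurableSet_Ioi
      intro s hs
      have hs0 : (0:ℝ) ≤ s := le_of_lt hs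
      have hb : ‖fderiv ℝ (⇑f) (s • e₀) e₀‖ ≤ ‖fderiv ℝ (⇑f) (s • e₀)‖ := by
        have h := (fderiv ℝ (⇑f) (s • e₀)).le_opNorm e₀
        rwa [he₀, mul_one] at h
      calc s ^ (d-1) * (2 * (‖f (s • e₀)‖ * ‖fderiv ℝ (⇑f) (s • e₀) e₀‖))
          ≤ s ^ (d-1) * (N * ‖f (s • e₀)‖ ^ 2 + N⁻¹ * ‖fderiv ℝ (⇑f) (s • e₀)‖ ^ 2) :=
            mul_le_mul_of_nonneg_left
              (key _ _ _ (norm_nonneg _) (norm_nonneg _) hb) (by positivity)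
        _ = N * (s ^ (d-1) * ‖f (s • e₀)‖ ^ 2)
            + N⁻¹ * (s ^ (d-1) * ‖fderiv ℝ (⇑f) (s • e₀)‖ ^ 2) := by ring
    have step6 : (∫ s in Ioi (0:ℝ), (N * (s ^ (d-1) * ‖f (s • e₀)‖ ^ 2)
            + N⁻¹ * (s ^ (d-1) * ‖fderiv ℝ (⇑f) (s • e₀)‖ ^ 2)))
        = N * (∫ s in Ioi (0:ℝ), s ^ (d-1) * ‖f (s • e₀)‖ ^ 2)
            + N⁻¹ * ∫ s in Ioi (0:ℝ), s ^ (d-1) * ‖fderiv ℝ (⇑f) (s • e₀)‖ ^ 2 := by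
      rw [integral_add (hint_F2.const_mul N) (hint_F3.const_mul N⁻¹),
        integral_const_mul, integral_const_mul]
    have hA : (∫ s in Ioi (0:ℝ), s ^ (d-1) * ‖f (s • e₀)‖ ^ 2) = I / κ := by
      rw [hpolarA]
      field_simp
    have hB : (∫ s in Ioi (0:ℝ), s ^ (d-1) * ‖fderiv ℝ (⇑f) (s • e₀)‖ ^ 2) ≤ N^2 * I / κ := by
      rw [le_div_iff₀ hκ]
      have h := hbern
      rw [hpolarB] at h
      linarith
    calc r ^ (d-1) * ‖f x‖ ^ 2
        ≤ ∫ s in Ioi r, r ^ (d-1) * (2 * (‖f (s • e₀)‖ * ‖fderiv ℝ (⇑f) (s • e₀) e₀‖)) := step2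
      _ ≤ ∫ s in Ioi r, s ^ (d-1) * (2 * (‖f (s • e₀)‖ * ‖fderiv ℝ (⇑f) (s • e₀) e₀‖)) := step3
      _ ≤ ∫ s in Ioi (0:ℝ), s ^ (d-1) * (2 * (‖f (s • e₀)‖ * ‖fderiv ℝ (⇑f) (s • e₀) e₀‖)) :=
          step4
      _ ≤ ∫ s in Ioi (0:ℝ), (N * (s ^ (d-1) * ‖f (s • e₀)‖ ^ 2)
            + N⁻¹ * (s ^ (d-1) * ‖fderiv ℝ (⇑f) (s • e₀)‖ ^ 2)) := step5
      _ = N * (∫ s in Ioi (0:ℝ), s ^ (d-1) * ‖f (s • e₀)‖ ^ 2)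
            + N⁻¹ * ∫ s in Ioi (0:ℝ), s ^ (d-1) * ‖fderiv ℝ (⇑f) (s • e₀)‖ ^ 2 := step6
      _ ≤ N * (I / κ) + N⁻¹ * (N^2 * I / κ) := by
          rw [hA]
          exact add_le_add le_rfl (mul_le_mul_of_nonneg_left hB (by positivity))
      _ = 2 * N * I / κ := by field_simp; ring
  -- conclude by taking square roots
  have hfinal : ‖x‖ ^ (((d:ℝ)-1)/2) * ‖f x‖ = Real.sqrt (r ^ (d-1) * ‖f x‖ ^ 2) := by
    rw [Real.sqrt_mul (by positivity : (0:ℝ) ≤ r ^ (d-1)), Real.sqrt_sq (norm_nonneg _)]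
    congr 1
    rw [Real.sqrt_eq_rpow, ← Real.rpow_natCast r (d-1), ← Real.rpow_mul hr0]
    congr 1
    push_cast [Nat.cast_sub hd]
    ring
  have hrhs : Real.sqrt (2/κ) * N ^ ((1:ℝ)/2) * I ^ ((1:ℝ)/2) = Real.sqrt (2*N*I/κ) := by
    rw [← Real.sqrt_eq_rpow, ← Real.sqrt_eq_rpow, ← Real.sqrt_mul (by positivity),
      ← Real.sqrt_mul (by positivity)]
    congr 1
    ring
  calc ‖x‖ ^ (((d:ℝ)-1)/2) * ‖f x‖ = Real.sqrt (r ^ (d-1) * ‖f x‖ ^ 2) := hfinal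
    _ ≤ Real.sqrt (2*N*I/κ) := Real.sqrt_le_sqrt main
    _ = Real.sqrt (2/κ) * N ^ ((1:ℝ)/2) * I ^ ((1:ℝ)/2) := hrhs.symm
end
end

section
/- There exists a constant C > 0 such that for every real r ≥ 1 one has |∫_0^{2π} e^{i r cos θ} dθ| ≤ C r^{-1/2}; that is, the Bessel function J₀(r) = (2π)^{-1} ∫_0^{2π} e^{i r cos θ} dθ obeys the decay bound |J₀(r)| ≤ C r^{-1/2} for r ≥ 1. -/
open MeasureTheory

noncomputable section

namespace BesselAux

def f (r : ℝ) (θ : ℝ) : ℂ := Complex.exp (Complex.I * (r : ℂ) * (Real.cos θ : ℂ))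

lemma cont_f (r : ℝ) : Continuous (f r) := by unfold f; fun_prop

lemma norm_f (r θ : ℝ) : ‖f r θ‖ = 1 := by
  unfold f
  rw [Complex.norm_exp]
  simp [Complex.mul_re, Complex.mul_im]

lemma intble (r a b : ℝ) : IntervalIntegrable (f r) volume a b :=
  (cont_f r).intervalIntegrable a b

lemma small_bound (r a b : ℝ) (h : a ≤ b) : ‖∫ θ in a..b, f r θ‖ ≤ b - a := by
  have := intervalIntegral.norm_integral_le_of_norm_le_const (C := 1) (f := f r) (a := a) (b := b)
    (fun x _ => le_of_eq (norm_f r x))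
  simpa [abs_of_nonneg (sub_nonneg.2 h)] using this

lemma ibp (r a b : ℝ) (hr : 0 < r) (hab : a ≤ b)
    (hsin : ∀ θ ∈ Set.Icc a b, 0 < Real.sin θ) :
    ‖∫ θ in a..b, f r θ‖ ≤
      1 / (r * Real.sin a) + 1 / (r * Real.sin b)
        + |∫ θ in a..b, |Real.cos θ| / (r * Real.sin θ ^ 2)| := by
  have huIcc : Set.uIcc a b = Set.Icc a b := Set.uIcc_of_le hab
  set u : ℝ → ℂ := fun θ => Complex.I * (((r * Real.sin θ)⁻¹ : ℝ) : ℂ) with hu_def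
  set u' : ℝ → ℂ := fun θ => Complex.I * ((-(r * Real.cos θ) / (r * Real.sin θ) ^ 2 : ℝ) : ℂ)
    with hu'_def
  set v' : ℝ → ℂ := fun θ => f r θ * (Complex.I * (r : ℂ) * ((-Real.sin θ : ℝ) : ℂ)) with hv'_def
  have hne : ∀ θ ∈ Set.Icc a b, r * Real.sin θ ≠ 0 :=
    fun θ hθ => ne_of_gt (mul_pos hr (hsin θ hθ))
  have hu : ∀ x ∈ Set.uIcc a b, HasDerivAt u (u' x) x := by
    rw [huIcc]
    intro x hx
    exact (((((Real.hasDerivAt_sin x).const_mul r).inv (hne x hx))).ofReal_comp).const_mul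
      Complex.I
  have hv : ∀ x ∈ Set.uIcc a b, HasDerivAt (f r) (v' x) x := by
    intro x _
    exact ((((Real.hasDerivAt_cos x).ofReal_comp)).const_mul (Complex.I * (r : ℂ))).cexp
  have hu'cont : ContinuousOn u' (Set.Icc a b) := by
    apply continuousOn_const.mul
    apply Complex.continuous_ofReal.comp_continuousOn
    exact ContinuousOn.div (by fun_prop) (by fun_prop)
      (fun x hx => pow_ne_zero _ (hne x hx))
  have hu'int : IntervalIntegrable u' volume a b := by
    apply ContinuousOn.intervalIntegrable
    rw [huIcc]
    exact hu'cont
  have hv'int : IntervalIntegrable v' volume a b := by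
    apply Continuous.intervalIntegrable
    exact (cont_f r).mul (by fun_prop)
  have heq : Set.EqOn (f r) (fun θ => u θ * v' θ) (Set.uIcc a b) := by
    intro θ hθ
    rw [huIcc] at hθ
    have hrc : (r : ℂ) ≠ 0 := Complex.ofReal_ne_zero.2 (ne_of_gt hr)
    have hsc : (Real.sin θ : ℂ) ≠ 0 := Complex.ofReal_ne_zero.2 (ne_of_gt (hsin θ hθ))
    simp only [u, v', f]
    push_cast
    rw [Complex.ofReal_sin] at hsc
    field_simp
    ring_nf
    rw [Complex.I_sq]
    ring
  rw [intervalIntegral.integral_congr heq]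
  rw [intervalIntegral.integral_mul_deriv_eq_deriv_mul hu hv hu'int hv'int]
  have hnu : ∀ θ, 0 < Real.sin θ → ‖u θ * f r θ‖ = 1 / (r * Real.sin θ) := by
    intro θ hθ
    rw [norm_mul, norm_f, mul_one]
    simp only [u]
    rw [norm_mul, Complex.norm_I, one_mul, Complex.norm_real, Real.norm_eq_abs,
      abs_inv, abs_of_pos (mul_pos hr hθ), one_div]
  have ha' : a ∈ Set.Icc a b := Set.left_mem_Icc.2 hab
  have hb' : b ∈ Set.Icc a b := Set.right_mem_Icc.2 hab
  have hbound : ‖∫ θ in a..b, u' θ * f r θ‖ ≤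
      |∫ θ in a..b, |Real.cos θ| / (r * Real.sin θ ^ 2)| := by
    apply intervalIntegral.norm_integral_le_abs_of_norm_le
    · filter_upwards with t
      rw [norm_mul, norm_f, mul_one]
      simp only [u']
      rw [norm_mul, Complex.norm_I, one_mul, Complex.norm_real, Real.norm_eq_abs]
      rw [abs_div, abs_neg, abs_mul, abs_of_pos hr, abs_pow, sq_abs, mul_pow]
      rw [show r ^ 2 * Real.sin t ^ 2 = r * (r * Real.sin t ^ 2) by ring]
      rw [mul_div_mul_left _ _ (ne_of_gt hr)]
    · apply ContinuousOn.intervalIntegrable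
      rw [huIcc]
      exact ContinuousOn.div (by fun_prop) (by fun_prop)
        (fun x hx => ne_of_gt (mul_pos hr (pow_pos (hsin x hx) 2)))
  calc ‖u b * f r b - u a * f r a - ∫ θ in a..b, u' θ * f r θ‖
      ≤ ‖u b * f r b - u a * f r a‖ + ‖∫ θ in a..b, u' θ * f r θ‖ := norm_sub_le _ _
    _ ≤ ‖u b * f r b‖ + ‖u a * f r a‖ + ‖∫ θ in a..b, u' θ * f r θ‖ := by
        gcongr; exact norm_sub_le _ _
    _ ≤ 1 / (r * Real.sin a) + 1 / (r * Real.sin b)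
        + |∫ θ in a..b, |Real.cos θ| / (r * Real.sin θ ^ 2)| := by
        rw [hnu a (hsin a ha'), hnu b (hsin b hb')]
        linarith [hbound]


lemma pi_half_gt_one : (1 : ℝ) < Real.pi / 2 := by
  have := Real.pi_gt_three
  linarith

lemma eval1 (r δ : ℝ) (hr : 0 < r) (hδ0 : 0 < δ) (hδ1 : δ ≤ 1) :
    |∫ θ in δ..(Real.pi / 2), |Real.cos θ| / (r * Real.sin θ ^ 2)| ≤ 1 / (r * Real.sin δ) := by
  have hδπ : δ ≤ Real.pi / 2 := hδ1.trans pi_half_gt_one.le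
  have huIcc : Set.uIcc δ (Real.pi / 2) = Set.Icc δ (Real.pi / 2) := Set.uIcc_of_le hδπ
  have hsin : ∀ θ ∈ Set.Icc δ (Real.pi / 2), 0 < Real.sin θ := by
    intro θ hθ
    apply Real.sin_pos_of_pos_of_lt_pi (lt_of_lt_of_le hδ0 hθ.1)
    have := Real.pi_pos
    linarith [hθ.2]
  have hG : ∀ θ ∈ Set.uIcc δ (Real.pi / 2),
      HasDerivAt (fun θ => -(r * Real.sin θ)⁻¹) (|Real.cos θ| / (r * Real.sin θ ^ 2)) θ := by
    rw [huIcc]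
    intro θ hθ
    have hne : r * Real.sin θ ≠ 0 := ne_of_gt (mul_pos hr (hsin θ hθ))
    have hcos : 0 ≤ Real.cos θ := by
      apply Real.cos_nonneg_of_mem_Icc
      constructor
      · linarith [hθ.1, Real.pi_pos]
      · exact hθ.2
    have := (((Real.hasDerivAt_sin θ).const_mul r).inv hne).neg
    refine HasDerivAt.congr_deriv this ?_
    rw [abs_of_nonneg hcos]
    have hs : Real.sin θ ≠ 0 := ne_of_gt (hsin θ hθ)
    field_simp
  have hint : IntervalIntegrable (fun θ => |Real.cos θ| / (r * Real.sin θ ^ 2))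
      volume δ (Real.pi / 2) := by
    apply ContinuousOn.intervalIntegrable
    rw [huIcc]
    exact ContinuousOn.div (by fun_prop) (by fun_prop)
      (fun x hx => ne_of_gt (mul_pos hr (pow_pos (hsin x hx) 2)))
  rw [intervalIntegral.integral_eq_sub_of_hasDerivAt hG hint]
  have hsd : 0 < Real.sin δ := hsin δ ⟨le_refl δ, hδπ⟩
  have hsd1 : Real.sin δ ≤ 1 := Real.sin_le_one δ
  rw [Real.sin_pi_div_two]
  have h1 : (r * 1)⁻¹ ≤ (r * Real.sin δ)⁻¹ := by
    apply inv_anti₀ (mul_pos hr hsd)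
    nlinarith
  rw [abs_of_nonneg (by linarith)]
  rw [one_div]
  linarith [inv_pos.2 (mul_pos hr (by linarith : (0:ℝ) < 1)), mul_pos hr hsd]

lemma eval2 (r δ : ℝ) (hr : 0 < r) (hδ0 : 0 < δ) (hδ1 : δ ≤ 1) :
    |∫ θ in (Real.pi / 2)..(Real.pi - δ), |Real.cos θ| / (r * Real.sin θ ^ 2)| ≤
      1 / (r * Real.sin δ) := by
  have hδπ : Real.pi / 2 ≤ Real.pi - δ := by linarith [pi_half_gt_one]
  have huIcc : Set.uIcc (Real.pi / 2) (Real.pi - δ) = Set.Icc (Real.pi / 2) (Real.pi - δ) :=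
    Set.uIcc_of_le hδπ
  have hsin : ∀ θ ∈ Set.Icc (Real.pi / 2) (Real.pi - δ), 0 < Real.sin θ := by
    intro θ hθ
    apply Real.sin_pos_of_pos_of_lt_pi
    · linarith [hθ.1, Real.pi_pos]
    · linarith [hθ.2]
  have hG : ∀ θ ∈ Set.uIcc (Real.pi / 2) (Real.pi - δ),
      HasDerivAt (fun θ => (r * Real.sin θ)⁻¹) (|Real.cos θ| / (r * Real.sin θ ^ 2)) θ := by
    rw [huIcc]
    intro θ hθ
    have hne : r * Real.sin θ ≠ 0 := ne_of_gt (mul_pos hr (hsin θ hθ))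
    have hcos : Real.cos θ ≤ 0 := by
      apply Real.cos_nonpos_of_pi_div_two_le_of_le hθ.1
      linarith [hθ.2, Real.pi_pos]
    have := ((Real.hasDerivAt_sin θ).const_mul r).inv hne
    refine HasDerivAt.congr_deriv this ?_
    rw [abs_of_nonpos hcos]
    have hs : Real.sin θ ≠ 0 := ne_of_gt (hsin θ hθ)
    field_simp
  have hint : IntervalIntegrable (fun θ => |Real.cos θ| / (r * Real.sin θ ^ 2))
      volume (Real.pi / 2) (Real.pi - δ) := by
    apply ContinuousOn.intervalIntegrable
    rw [huIcc]
    exact ContinuousOn.div (by fun_prop) (by fun_prop)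
      (fun x hx => ne_of_gt (mul_pos hr (pow_pos (hsin x hx) 2)))
  rw [intervalIntegral.integral_eq_sub_of_hasDerivAt hG hint]
  have hsd : 0 < Real.sin δ := by
    apply Real.sin_pos_of_pos_of_lt_pi hδ0
    linarith [pi_half_gt_one]
  have hsd1 : Real.sin δ ≤ 1 := Real.sin_le_one δ
  rw [Real.sin_pi_sub, Real.sin_pi_div_two]
  have h1 : (r * 1)⁻¹ ≤ (r * Real.sin δ)⁻¹ := by
    apply inv_anti₀ (mul_pos hr hsd)
    nlinarith
  rw [abs_of_nonneg (by linarith)]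
  rw [one_div]
  linarith [inv_pos.2 (mul_pos hr (by linarith : (0:ℝ) < 1)), mul_pos hr hsd]

lemma osc1 (r δ : ℝ) (hr : 0 < r) (hδ0 : 0 < δ) (hδ1 : δ ≤ 1) :
    ‖∫ θ in δ..(Real.pi / 2), f r θ‖ ≤ 3 / (r * Real.sin δ) := by
  have hδπ : δ ≤ Real.pi / 2 := hδ1.trans pi_half_gt_one.le
  have hsin : ∀ θ ∈ Set.Icc δ (Real.pi / 2), 0 < Real.sin θ := by
    intro θ hθ
    apply Real.sin_pos_of_pos_of_lt_pi (lt_of_lt_of_le hδ0 hθ.1)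
    have := Real.pi_pos
    linarith [hθ.2]
  have h := ibp r δ (Real.pi / 2) hr hδπ hsin
  have h2 := eval1 r δ hr hδ0 hδ1
  have hsd : 0 < Real.sin δ := hsin δ ⟨le_refl δ, hδπ⟩
  have hsd1 : Real.sin δ ≤ 1 := Real.sin_le_one δ
  rw [Real.sin_pi_div_two] at h
  have h3 : 1 / (r * 1) ≤ 1 / (r * Real.sin δ) := by
    apply div_le_div_of_nonneg_left one_pos.le (mul_pos hr hsd)
    nlinarith
  calc ‖∫ θ in δ..(Real.pi / 2), f r θ‖
      ≤ 1 / (r * Real.sin δ) + 1 / (r * 1)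
        + |∫ θ in δ..(Real.pi / 2), |Real.cos θ| / (r * Real.sin θ ^ 2)| := h
    _ ≤ 1 / (r * Real.sin δ) + 1 / (r * Real.sin δ) + 1 / (r * Real.sin δ) := by
        gcongr <;> first | exact h3 | exact h2
    _ = 3 / (r * Real.sin δ) := by ring

lemma osc2 (r δ : ℝ) (hr : 0 < r) (hδ0 : 0 < δ) (hδ1 : δ ≤ 1) :
    ‖∫ θ in (Real.pi / 2)..(Real.pi - δ), f r θ‖ ≤ 3 / (r * Real.sin δ) := by
  have hδπ : Real.pi / 2 ≤ Real.pi - δ := by linarith [pi_half_gt_one]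
  have hsin : ∀ θ ∈ Set.Icc (Real.pi / 2) (Real.pi - δ), 0 < Real.sin θ := by
    intro θ hθ
    apply Real.sin_pos_of_pos_of_lt_pi
    · linarith [hθ.1, Real.pi_pos]
    · linarith [hθ.2]
  have h := ibp r (Real.pi / 2) (Real.pi - δ) hr hδπ hsin
  have h2 := eval2 r δ hr hδ0 hδ1
  have hsd : 0 < Real.sin δ := by
    apply Real.sin_pos_of_pos_of_lt_pi hδ0
    linarith [pi_half_gt_one]
  have hsd1 : Real.sin δ ≤ 1 := Real.sin_le_one δ
  rw [Real.sin_pi_div_two, Real.sin_pi_sub] at h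
  have h3 : 1 / (r * 1) ≤ 1 / (r * Real.sin δ) := by
    apply div_le_div_of_nonneg_left one_pos.le (mul_pos hr hsd)
    nlinarith
  calc ‖∫ θ in (Real.pi / 2)..(Real.pi - δ), f r θ‖
      ≤ 1 / (r * 1) + 1 / (r * Real.sin δ)
        + |∫ θ in (Real.pi / 2)..(Real.pi - δ), |Real.cos θ| / (r * Real.sin θ ^ 2)| := h
    _ ≤ 1 / (r * Real.sin δ) + 1 / (r * Real.sin δ) + 1 / (r * Real.sin δ) := by
        gcongr <;> first | exact h3 | exact h2
    _ = 3 / (r * Real.sin δ) := by ring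


lemma symm_half (r : ℝ) :
    ∫ θ in (Real.pi)..(2 * Real.pi), f r θ = ∫ θ in (0 : ℝ)..Real.pi, f r θ := by
  have h1 := intervalIntegral.integral_comp_sub_left (a := 0) (b := Real.pi) (f r) (2 * Real.pi)
  rw [show 2 * Real.pi - Real.pi = Real.pi by ring, sub_zero] at h1
  rw [← h1]
  apply intervalIntegral.integral_congr
  intro x _
  unfold f
  simp [Real.cos_sub, Real.cos_two_pi, Real.sin_two_pi]

theorem main_bound (r : ℝ) (hr : 1 ≤ r) :
    ‖∫ θ in (0 : ℝ)..(2 * Real.pi), f r θ‖ ≤ 28 * r ^ (-(1 : ℝ) / 2) := by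
  have hr0 : (0 : ℝ) < r := lt_of_lt_of_le one_pos hr
  set δ := r ^ (-(1 : ℝ) / 2) with hδdef
  have hδ0 : 0 < δ := Real.rpow_pos_of_pos hr0 _
  have hδ1 : δ ≤ 1 := Real.rpow_le_one_of_one_le_of_nonpos hr (by norm_num)
  have hδδ : δ * δ = r ^ (-1 : ℝ) := by
    rw [hδdef, ← Real.rpow_add hr0]; norm_num
  have hrδδ : r * (δ * δ) = 1 := by
    rw [hδδ, show (-1 : ℝ) = ((-1 : ℤ) : ℝ) by norm_num, Real.rpow_intCast, zpow_neg_one]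
    exact mul_inv_cancel₀ (ne_of_gt hr0)
  have hrd : r * δ * δ = 1 := by rw [mul_assoc]; exact hrδδ
  have hsinδ : δ / 2 ≤ Real.sin δ := by nlinarith [Real.sin_gt_sub_cube hδ0]
  have hsd0 : 0 < Real.sin δ := lt_of_lt_of_le (by linarith) hsinδ
  have h6 : 3 / (r * Real.sin δ) ≤ 6 * δ := by
    rw [div_le_iff₀ (mul_pos hr0 hsd0)]
    nlinarith [mul_le_mul_of_nonneg_left hsinδ
      (by positivity : (0 : ℝ) ≤ 6 * δ * r)]
  have b1 : ‖∫ θ in (0 : ℝ)..δ, f r θ‖ ≤ δ := by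
    simpa using small_bound r 0 δ hδ0.le
  have b4 : ‖∫ θ in (Real.pi - δ)..Real.pi, f r θ‖ ≤ δ := by
    have := small_bound r (Real.pi - δ) Real.pi (by linarith)
    simpa using this
  have b2 : ‖∫ θ in δ..(Real.pi / 2), f r θ‖ ≤ 6 * δ := (osc1 r δ hr0 hδ0 hδ1).trans h6
  have b3 : ‖∫ θ in (Real.pi / 2)..(Real.pi - δ), f r θ‖ ≤ 6 * δ :=
    (osc2 r δ hr0 hδ0 hδ1).trans h6
  have hs1 : ∫ θ in (0 : ℝ)..Real.pi, f r θ =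
      (∫ θ in (0 : ℝ)..δ, f r θ) + (∫ θ in δ..(Real.pi / 2), f r θ)
        + (∫ θ in (Real.pi / 2)..(Real.pi - δ), f r θ)
        + (∫ θ in (Real.pi - δ)..Real.pi, f r θ) := by
    rw [intervalIntegral.integral_add_adjacent_intervals (intble r 0 δ)
        (intble r δ (Real.pi / 2)),
      intervalIntegral.integral_add_adjacent_intervals (intble r 0 (Real.pi / 2))
        (intble r (Real.pi / 2) (Real.pi - δ)),
      intervalIntegral.integral_add_adjacent_intervals (intble r 0 (Real.pi - δ))
        (intble r (Real.pi - δ) Real.pi)]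
  have half : ‖∫ θ in (0 : ℝ)..Real.pi, f r θ‖ ≤ 14 * δ := by
    rw [hs1]
    have h1 := norm_add_le ((∫ θ in (0 : ℝ)..δ, f r θ) + (∫ θ in δ..(Real.pi / 2), f r θ)
      + (∫ θ in (Real.pi / 2)..(Real.pi - δ), f r θ)) (∫ θ in (Real.pi - δ)..Real.pi, f r θ)
    have h2 := norm_add_le ((∫ θ in (0 : ℝ)..δ, f r θ) + (∫ θ in δ..(Real.pi / 2), f r θ))
      (∫ θ in (Real.pi / 2)..(Real.pi - δ), f r θ)
    have h3 := norm_add_le (∫ θ in (0 : ℝ)..δ, f r θ) (∫ θ in δ..(Real.pi / 2), f r θ)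
    linarith
  have hs0 : ∫ θ in (0 : ℝ)..(2 * Real.pi), f r θ =
      (∫ θ in (0 : ℝ)..Real.pi, f r θ) + (∫ θ in (0 : ℝ)..Real.pi, f r θ) := by
    rw [← intervalIntegral.integral_add_adjacent_intervals (intble r 0 Real.pi)
      (intble r Real.pi (2 * Real.pi)), symm_half]
  calc ‖∫ θ in (0 : ℝ)..(2 * Real.pi), f r θ‖
      ≤ ‖∫ θ in (0 : ℝ)..Real.pi, f r θ‖ + ‖∫ θ in (0 : ℝ)..Real.pi, f r θ‖ := by
        rw [hs0]; exact norm_add_le _ _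
    _ ≤ 28 * δ := by linarith

end BesselAux

/-- Decay of the Bessel function `J₀`: for `r ≥ 1`,
`|∫_0^{2π} e^{i r cos θ} dθ| ≤ C r^{-1/2}`. -/
theorem bessel_J0_decay :
    ∃ C : ℝ, 0 < C ∧
      ∀ r : ℝ, 1 ≤ r →
        ‖∫ θ in (0 : ℝ)..(2 * Real.pi),
            Complex.exp (Complex.I * (r : ℂ) * (Real.cos θ : ℂ))‖ ≤ C * r ^ (-(1 : ℝ) / 2) := by
  exact ⟨28, by norm_num, fun r hr => BesselAux.main_bound r hr⟩

end
end
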